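/- arXiv:2112.12354 — 4 statements merged into one kernel-verified Lean document; each statement's English description precedes it below -/
import Mathlib

section
/- For the conjugate gradient algorithm applied to Wx = b with x_0 = 0, the squared residual norm at step n satisfies ‖r_n‖²₂ = (∏_{j=0}^{n−1} b_j(ν)²) / π_n(0;ν)², where r_n = b − Wx_n, ν is the vector empirical spectral distribution of (W,b), b_j(ν) are the off-diagonal Jacobi coefficients of ν, and π_n(0;ν) is the degree-n monic orthogonal polynomial evaluated at 0. -/
open MeasureTheory Polynomial Matrix

lemma linVanish (n : ℕ) (p : ℕ → Polynomial ℝ) (Φ : Polynomial ℝ → ℝ)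
    (hadd : ∀ u v, Φ (u + v) = Φ u + Φ v)
    (hsmul : ∀ (c : ℝ) u, Φ (Polynomial.C c * u) = c * Φ u)
    (hdeg : ∀ k < n, (p k).natDegree = k)
    (hlead : ∀ k < n, (p k).leadingCoeff ≠ 0)
    (horth : ∀ k < n, Φ (p k) = 0) :
    ∀ T : Polynomial ℝ, T.natDegree < n → Φ T = 0 := by
  suffices h : ∀ d, d < n → ∀ T : Polynomial ℝ, T.natDegree ≤ d → Φ T = 0 by
    intro T hT; exact h T.natDegree hT T le_rfl
  intro d
  induction d with
  | zero =>
    intro hn T hT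
    have hp0 : p 0 = C ((p 0).coeff 0) :=
      eq_C_of_natDegree_le_zero (le_of_eq (hdeg 0 hn))
    have hc0 : (p 0).coeff 0 ≠ 0 := by
      have := hlead 0 hn
      rwa [Polynomial.leadingCoeff, hdeg 0 hn] at this
    have hTc : C (T.coeff 0 / (p 0).coeff 0) * p 0 = T := by
      nth_rewrite 2 [hp0]
      rw [← C_mul, div_mul_cancel₀ _ hc0, ← eq_C_of_natDegree_le_zero hT]
    rw [← hTc, hsmul, horth 0 hn, mul_zero]
  | succ e ih =>
    intro hn T hT
    have hen : e < n := Nat.lt_of_succ_lt hn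
    set γ := T.coeff (e + 1) / (p (e + 1)).leadingCoeff with hγ
    set T' := T - C γ * p (e + 1) with hT'
    have hpd : (p (e + 1)).natDegree = e + 1 := hdeg (e + 1) hn
    have hpl : (p (e + 1)).leadingCoeff ≠ 0 := hlead (e + 1) hn
    have hT'd : T'.natDegree ≤ e := by
      rw [natDegree_le_iff_coeff_eq_zero]
      intro m hm
      rw [hT', coeff_sub, coeff_C_mul]
      rcases eq_or_lt_of_le (Nat.succ_le_of_lt hm) with hme | hme
      · have hcl : (p (e + 1)).coeff (e + 1) = (p (e + 1)).leadingCoeff := by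
          rw [Polynomial.leadingCoeff, hpd]
        rw [← hme, hcl, hγ, div_mul_cancel₀ _ hpl, sub_self]
      · rw [coeff_eq_zero_of_natDegree_lt (lt_of_le_of_lt hT hme),
          coeff_eq_zero_of_natDegree_lt (by omega : (p (e+1)).natDegree < m), mul_zero, sub_zero]
    have hsplit : Φ T = Φ T' + γ * Φ (p (e + 1)) := by
      rw [← hsmul, ← hadd, hT', sub_add_cancel]
    rw [hsplit, horth (e + 1) hn, mul_zero, add_zero]
    exact ih hen T' hT'd

/-- for the conjugate gradient algorithm applied to `W x = b` with `x₀ = 0`, the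
squared residual norm at step `n` satisfies
`‖r_n‖₂² = (∏_{j<n} b_j(ν)²) / π_n(0;ν)²`, where `r_n = b − W x_n`, `ν` is the vector empirical
spectral distribution of `(W,b)`, `b_j(ν)` are the off-diagonal Jacobi coefficients of `ν` and
`π_n(·;ν)` is the degree-`n` monic orthogonal polynomial of `ν`. -/
theorem stmt8
    (N : ℕ) (W : Matrix (Fin N) (Fin N) ℝ)
    (hWsym : W.IsSymm) (hWpd : W.PosDef)
    (bvec : Fin N → ℝ) (hb : bvec ⬝ᵥ bvec = 1)
    (lam : Fin N → ℝ) (q : Fin N → Fin N → ℝ)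
    (heig : ∀ j, W.mulVec (q j) = lam j • q j)
    (horthq : ∀ i j, q i ⬝ᵥ q j = if i = j then (1 : ℝ) else 0)
    (ν : Measure ℝ)
    (hν : ν = ∑ j : Fin N, (ENNReal.ofReal ((q j ⬝ᵥ bvec) ^ 2)) • Measure.dirac (lam j))
    (n : ℕ)
    (hatoms : ∃ t : Finset ℝ, n + 1 ≤ t.card ∧ ∀ x ∈ t, ν {x} ≠ 0)
    -- orthonormal polynomials `p` of `ν` with recurrence coefficients `a`, `b'`
    (p : ℕ → Polynomial ℝ) (a b' : ℕ → ℝ)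
    (hdeg : ∀ k ≤ n, (p k).natDegree = k)
    (hlead : ∀ k ≤ n, 0 < (p k).leadingCoeff)
    (horthp : ∀ k ≤ n, ∀ m ≤ n, k ≠ m → ∫ t, (p k).eval t * (p m).eval t ∂ν = 0)
    (hnorm : ∀ k ≤ n, ∫ t, (p k).eval t ^ 2 ∂ν = 1)
    (hbpos : ∀ k < n, 0 < b' k)
    (hrec : ∀ k < n, Polynomial.X * p k =
      Polynomial.C (a k) * p k + Polynomial.C (b' k) * p (k + 1) +
        (if k = 0 then 0 else Polynomial.C (b' (k - 1)) * p (k - 1)))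
    -- monic orthogonal polynomials of `ν`
    (mop : ℕ → Polynomial ℝ)
    (hrel : ∀ k ≤ n, p k = Polynomial.C ((p k).leadingCoeff) * mop k)
    (x xn : Fin N → ℝ)
    (hx : W.mulVec x = bvec)
    (hxnmem : xn ∈ Submodule.span ℝ {v : Fin N → ℝ | ∃ k < n, v = (W ^ k).mulVec bvec})
    (hxnmin : ∀ y ∈ Submodule.span ℝ {v : Fin N → ℝ | ∃ k < n, v = (W ^ k).mulVec bvec},
      (x - xn) ⬝ᵥ W.mulVec (x - xn) ≤ (x - y) ⬝ᵥ W.mulVec (x - y)) :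
    (bvec - W.mulVec xn) ⬝ᵥ (bvec - W.mulVec xn) =
      (∏ j ∈ Finset.range n, (b' j) ^ 2) / ((mop n).eval 0) ^ 2 := by
  classical
  set w : Fin N → ℝ := fun j => (q j ⬝ᵥ bvec) ^ 2 with hw
  -- Parseval
  have hpar : ∀ u v : Fin N → ℝ, (∑ j, (q j ⬝ᵥ u) * (q j ⬝ᵥ v)) = u ⬝ᵥ v := by
    intro u v
    set Q : Matrix (Fin N) (Fin N) ℝ := Matrix.of q with hQ
    have hQQ : Q * Qᵀ = 1 := by
      ext i j
      rw [Matrix.mul_apply, Matrix.one_apply, ← horthq i j]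
      rfl
    have hQQ' : Qᵀ * Q = 1 := mul_eq_one_comm.mp hQQ
    have h1 : ∀ z : Fin N → ℝ, Q.mulVec z = fun j => q j ⬝ᵥ z := fun z => rfl
    calc (∑ j, (q j ⬝ᵥ u) * (q j ⬝ᵥ v)) = (Q.mulVec u) ⬝ᵥ (Q.mulVec v) := by
          rw [h1, h1]; rfl
      _ = u ⬝ᵥ v := by
          rw [Matrix.dotProduct_mulVec, ← Matrix.mulVec_transpose, Matrix.mulVec_mulVec,
            hQQ', Matrix.one_mulVec]
  -- integrals against ν are weighted sums
  have hInt : ∀ f : ℝ → ℝ, Continuous f → ∫ t, f t ∂ν = ∑ j, w j * f (lam j) := by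
    intro f hf
    rw [hν, integral_finset_sum_measure]
    · refine Finset.sum_congr rfl fun j _ => ?_
      rw [integral_smul_measure, integral_dirac, smul_eq_mul,
        ENNReal.toReal_ofReal (sq_nonneg _)]
    · intro j _
      exact ((integrable_const (f (lam j))).congr (ae_eq_dirac f).symm).smul_measure
        ENNReal.ofReal_ne_top
  -- atoms of ν
  have hatomw : ∀ y : ℝ, ν {y} ≠ 0 → ∃ j, lam j = y ∧ w j ≠ 0 := by
    intro y hy
    by_contra hcon
    push_neg at hcon
    apply hy
    rw [hν, Measure.finset_sum_apply]
    refine Finset.sum_eq_zero fun j _ => ?_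
    rw [Measure.smul_apply, Measure.dirac_apply]
    by_cases hj : lam j = y
    · have hz : ((q j ⬝ᵥ bvec) ^ 2 : ℝ) = 0 := hcon j hj
      rw [hz]
      simp
    · rw [Set.indicator_of_notMem (by simpa using hj)]
      simp
  -- eigen-dot identities
  have hWdot : ∀ (j) (u : Fin N → ℝ), q j ⬝ᵥ W.mulVec u = lam j * (q j ⬝ᵥ u) := by
    intro j u
    rw [Matrix.dotProduct_mulVec, ← Matrix.mulVec_transpose, hWsym, heig j,
      smul_dotProduct, smul_eq_mul]
  have hpow : ∀ (j) (k : ℕ), q j ⬝ᵥ (W ^ k).mulVec bvec = lam j ^ k * (q j ⬝ᵥ bvec) := by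
    intro j k
    induction k with
    | zero => rw [pow_zero, Matrix.one_mulVec, pow_zero, one_mul]
    | succ m ih =>
      rw [pow_succ', ← Matrix.mulVec_mulVec, hWdot, ih, pow_succ']
      ring
  -- Krylov space
  have hset : {v : Fin N → ℝ | ∃ k < n, v = (W ^ k).mulVec bvec} =
      Set.range (fun k : Fin n => (W ^ (k : ℕ)).mulVec bvec) := by
    ext v
    constructor
    · rintro ⟨k, hk, rfl⟩; exact ⟨⟨k, hk⟩, rfl⟩
    · rintro ⟨k, rfl⟩; exact ⟨(k : ℕ), k.2, rfl⟩
  rw [hset] at hxnmem hxnmin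
  obtain ⟨α, hα⟩ := (Submodule.mem_span_range_iff_exists_fun ℝ).mp hxnmem
  -- residual polynomial
  set P : Polynomial ℝ := ∑ k : Fin n, C (α k) * X ^ (k : ℕ) with hP
  set R : Polynomial ℝ := 1 - X * P with hRdef
  have hReval : ∀ t : ℝ, R.eval t = 1 - t * ∑ k : Fin n, α k * t ^ (k : ℕ) := by
    intro t
    rw [hRdef, hP]
    rw [eval_sub, eval_one, eval_mul, eval_X, eval_finset_sum]
    simp only [eval_mul, eval_C, eval_pow, eval_X]
  have hR0 : R.eval 0 = 1 := by
    rw [hReval 0]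
    simp
  have hRdeg : R.natDegree ≤ n := by
    have hPcoeff : ∀ m, n ≤ m → P.coeff m = 0 := by
      intro m hm
      rw [hP, Polynomial.finset_sum_coeff]
      refine Finset.sum_eq_zero fun k _ => ?_
      rw [coeff_C_mul, coeff_X_pow, if_neg (by have := k.2; omega), mul_zero]
    rw [natDegree_le_iff_coeff_eq_zero]
    intro m hm
    obtain ⟨m', rfl⟩ : ∃ m', m = m' + 1 := ⟨m - 1, by omega⟩
    rw [hRdef, coeff_sub, coeff_X_mul, hPcoeff m' (by omega)]
    simp [Polynomial.coeff_one]
  -- the quadratic form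
  set Φ : Polynomial ℝ → Polynomial ℝ → ℝ :=
    fun u v => ∑ j, w j * (u.eval (lam j) * v.eval (lam j)) with hΦ
  have hΦsym : ∀ u v, Φ u v = Φ v u := by
    intro u v; simp only [hΦ]; exact Finset.sum_congr rfl fun j _ => by ring
  have hΦadd : ∀ u v t, Φ (u + v) t = Φ u t + Φ v t := by
    intro u v t; simp only [hΦ, eval_add]
    rw [← Finset.sum_add_distrib]; exact Finset.sum_congr rfl fun j _ => by ring
  have hΦsmul : ∀ (c : ℝ) u t, Φ (C c * u) t = c * Φ u t := by
    intro c u t; simp only [hΦ, eval_mul, eval_C, Finset.mul_sum]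
    exact Finset.sum_congr rfl fun j _ => by ring
  have hΦsub : ∀ u v t, Φ (u - v) t = Φ u t - Φ v t := by
    intro u v t; simp only [hΦ, eval_sub]
    rw [← Finset.sum_sub_distrib]; exact Finset.sum_congr rfl fun j _ => by ring
  -- orthonormality in Φ form
  have hppo : ∀ k ≤ n, ∀ m ≤ n, k ≠ m → Φ (p k) (p m) = 0 := by
    intro k hk m hm hkm
    have hcont : Continuous fun t : ℝ => (p k).eval t * (p m).eval t :=
      ((p k).continuous).mul ((p m).continuous)
    have h := hInt _ hcont
    rw [horthp k hk m hm hkm] at h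
    simp only [hΦ]
    exact h.symm
  have hppn : ∀ k ≤ n, Φ (p k) (p k) = 1 := by
    intro k hk
    have hcont : Continuous fun t : ℝ => (p k).eval t ^ 2 := ((p k).continuous).pow 2
    have h := hInt _ hcont
    rw [hnorm k hk] at h
    simp only [hΦ]
    calc (∑ j, w j * ((p k).eval (lam j) * (p k).eval (lam j)))
        = ∑ j, w j * (p k).eval (lam j) ^ 2 := Finset.sum_congr rfl fun j _ => by ring
      _ = 1 := h.symm
  -- monomial expansion
  have hmonexp : ∀ (T U : Polynomial ℝ), Φ T U =
      ∑ i ∈ Finset.range (T.natDegree + 1), T.coeff i * Φ (X ^ i) U := by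
    intro T U
    simp only [hΦ, eval_pow, eval_X, Finset.mul_sum]
    rw [Finset.sum_comm]
    refine Finset.sum_congr rfl fun j _ => ?_
    rw [eval_eq_sum_range (p := T) (lam j), Finset.sum_mul, Finset.mul_sum]
    exact Finset.sum_congr rfl fun i _ => by ring
  -- symmetry of the W-inner product
  have hsymdot : ∀ u v : Fin N → ℝ, u ⬝ᵥ W.mulVec v = v ⬝ᵥ W.mulVec u := by
    intro u v
    rw [Matrix.dotProduct_mulVec, ← Matrix.mulVec_transpose, hWsym, dotProduct_comm]
  -- first-order optimality
  have hg : ∀ v ∈ Submodule.span ℝ (Set.range fun k : Fin n => (W ^ (k : ℕ)).mulVec bvec),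
      (x - xn) ⬝ᵥ W.mulVec v = 0 := by
    intro v hv
    by_cases hv0 : v = 0
    · simp [hv0]
    have hmpos : 0 < v ⬝ᵥ W.mulVec v := by
      have h := hWpd.dotProduct_mulVec_pos hv0
      simpa using h
    set g := (x - xn) ⬝ᵥ W.mulVec v with hgdef
    set m := v ⬝ᵥ W.mulVec v with hmdef
    set ε : ℝ := g / m with hεdef
    have hy : xn + ε • v ∈ Submodule.span ℝ
        (Set.range fun k : Fin n => (W ^ (k : ℕ)).mulVec bvec) :=
      Submodule.add_mem _ hxnmem (Submodule.smul_mem _ _ hv)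
    have hmin := hxnmin _ hy
    have hswap : v ⬝ᵥ W.mulVec (x - xn) = g := by rw [hsymdot]
    have hexp : (x - (xn + ε • v)) ⬝ᵥ W.mulVec (x - (xn + ε • v))
        = (x - xn) ⬝ᵥ W.mulVec (x - xn) - 2 * ε * g + ε ^ 2 * m := by
      rw [sub_add_eq_sub_sub]
      rw [Matrix.mulVec_sub, Matrix.mulVec_smul, sub_dotProduct,
        dotProduct_sub, dotProduct_sub, smul_dotProduct,
        smul_dotProduct, dotProduct_smul, dotProduct_smul,
        smul_eq_mul, smul_eq_mul, smul_eq_mul, smul_eq_mul, hswap, ← hgdef, ← hmdef]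
      ring
    rw [hexp] at hmin
    have hε2 : ε ^ 2 * m = g ^ 2 / m := by
      rw [hεdef]
      field_simp
    have hεg : 2 * ε * g = 2 * (g ^ 2 / m) := by
      rw [hεdef]
      field_simp
    rw [hε2, hεg] at hmin
    have hgsq : g ^ 2 ≤ 0 := by
      have h1 : g ^ 2 / m ≤ 0 := by linarith
      have h2 := (div_nonpos_iff.mp h1)
      rcases h2 with ⟨_, h3⟩ | ⟨h4, _⟩
      · linarith
      · exact h4
    have : g ^ 2 = 0 := le_antisymm hgsq (sq_nonneg g)
    exact sq_eq_zero_iff.mp this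
  have hrW : bvec - W.mulVec xn = W.mulVec (x - xn) := by
    rw [Matrix.mulVec_sub, hx]
  have hrv : ∀ v ∈ Submodule.span ℝ (Set.range fun k : Fin n => (W ^ (k : ℕ)).mulVec bvec),
      (bvec - W.mulVec xn) ⬝ᵥ v = 0 := by
    intro v hv
    rw [hrW, dotProduct_comm, hsymdot]
    exact hg v hv
  -- residual in eigencoordinates
  have hds : ∀ (u : Fin N → ℝ) (f : Fin n → Fin N → ℝ),
      u ⬝ᵥ (∑ k, f k) = ∑ k, u ⬝ᵥ f k := by
    intro u f
    simp only [dotProduct, Finset.sum_apply, Finset.mul_sum]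
    exact Finset.sum_comm
  have hqres : ∀ j, q j ⬝ᵥ (bvec - W.mulVec xn) = (q j ⬝ᵥ bvec) * R.eval (lam j) := by
    intro j
    have hxq : q j ⬝ᵥ xn = (∑ k : Fin n, α k * lam j ^ (k : ℕ)) * (q j ⬝ᵥ bvec) := by
      rw [← hα, hds, Finset.sum_mul]
      refine Finset.sum_congr rfl fun k _ => ?_
      rw [dotProduct_smul, smul_eq_mul, hpow]
      ring
    rw [dotProduct_sub, hWdot, hxq, hReval (lam j)]
    ring
  have hRR : (bvec - W.mulVec xn) ⬝ᵥ (bvec - W.mulVec xn) = Φ R R := by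
    rw [← hpar]
    simp only [hΦ]
    refine Finset.sum_congr rfl fun j _ => ?_
    rw [hqres j]
    show (q j ⬝ᵥ bvec) * R.eval (lam j) * ((q j ⬝ᵥ bvec) * R.eval (lam j))
        = (q j ⬝ᵥ bvec) ^ 2 * (R.eval (lam j) * R.eval (lam j))
    ring
  -- orthogonality of R to low-degree monomials
  have hmono : ∀ i < n, Φ (X ^ i) R = 0 := by
    intro i hi
    have hv : (W ^ i).mulVec bvec ∈ Submodule.span ℝ
        (Set.range fun k : Fin n => (W ^ (k : ℕ)).mulVec bvec) :=
      Submodule.subset_span ⟨⟨i, hi⟩, rfl⟩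
    have h0 := hrv _ hv
    rw [← hpar] at h0
    rw [← h0]
    simp only [hΦ, eval_pow, eval_X]
    refine Finset.sum_congr rfl fun j _ => ?_
    rw [hqres j, hpow j i]
    show (q j ⬝ᵥ bvec) ^ 2 * (lam j ^ i * R.eval (lam j))
        = (q j ⬝ᵥ bvec) * R.eval (lam j) * (lam j ^ i * (q j ⬝ᵥ bvec))
    ring
  have hΦTR : ∀ T : Polynomial ℝ, T.natDegree < n → Φ T R = 0 := by
    refine linVanish n p (fun T => Φ T R) (fun u v => hΦadd u v R) (fun c u => hΦsmul c u R)
      (fun k hk => hdeg k (le_of_lt hk)) (fun k hk => ne_of_gt (hlead k (le_of_lt hk)))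
      (fun k hk => ?_)
    show Φ (p k) R = 0
    rw [hmonexp]
    refine Finset.sum_eq_zero fun i hi => ?_
    rw [hmono i (by have := Finset.mem_range.mp hi; have h2 := hdeg k (le_of_lt hk); omega),
      mul_zero]
  -- facts about mop n
  have hcpos : 0 < (p n).leadingCoeff := hlead n le_rfl
  set c : ℝ := (p n).leadingCoeff with hcdef
  have hcne : c ≠ 0 := ne_of_gt hcpos
  have hπ : p n = C c * mop n := hrel n le_rfl
  have hπeq : C c⁻¹ * p n = mop n := by
    rw [hπ, ← mul_assoc, ← C_mul, inv_mul_cancel₀ hcne, C_1, one_mul]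
  have hπdeg : (mop n).natDegree = n := by
    have h := hdeg n le_rfl
    rwa [hπ, natDegree_C_mul hcne] at h
  have hπlc : (mop n).leadingCoeff = 1 := by
    have h : (p n).leadingCoeff = c * (mop n).leadingCoeff := by
      rw [hπ, Polynomial.leadingCoeff_mul, Polynomial.leadingCoeff_C]
    rw [← hcdef] at h
    field_simp at h
    linarith
  have hπn : (mop n).coeff n = 1 := by
    have h := Polynomial.coeff_natDegree (p := mop n)
    rwa [hπdeg, hπlc] at h
  have hΦTπ : ∀ T : Polynomial ℝ, T.natDegree < n → Φ T (mop n) = 0 := by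
    refine linVanish n p (fun T => Φ T (mop n)) (fun u v => hΦadd u v _) (fun cc u => hΦsmul cc u _)
      (fun k hk => hdeg k (le_of_lt hk)) (fun k hk => ne_of_gt (hlead k (le_of_lt hk)))
      (fun k hk => ?_)
    show Φ (p k) (mop n) = 0
    rw [hΦsym, ← hπeq, hΦsmul, hΦsym, hppo k (le_of_lt hk) n le_rfl (ne_of_lt hk), mul_zero]
  -- S = 0
  set β : ℝ := R.coeff n with hβdef
  set S : Polynomial ℝ := R - C β * mop n with hSdef
  have hSdegle : S.natDegree ≤ n := by
    refine le_trans (Polynomial.natDegree_sub_le _ _) ?_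
    rw [max_le_iff]
    exact ⟨hRdeg, le_trans (Polynomial.natDegree_C_mul_le _ _) (le_of_eq hπdeg)⟩
  have hS0 : S = 0 := by
    rcases Nat.eq_zero_or_pos n with hn0 | hn
    · subst hn0
      have hR1 : R = 1 := by
        rw [hRdef, hP]
        simp
      have hmop : mop 0 = 1 := by
        have h := eq_C_of_natDegree_le_zero (le_of_eq hπdeg)
        rw [hπn] at h
        rw [h, C_1]
      rw [hSdef, hR1, hmop, mul_one, hβdef, hR1]
      simp
    · have hSco : S.coeff n = 0 := by
        rw [hSdef, coeff_sub, coeff_C_mul, hπn, mul_one, hβdef, sub_self]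
      have hSdeg : S.natDegree < n := by
        have hle : S.natDegree ≤ n - 1 := by
          rw [natDegree_le_iff_coeff_eq_zero]
          intro m hm
          rcases eq_or_lt_of_le (by omega : n ≤ m) with hmn | hmn
          · rw [← hmn]; exact hSco
          · exact coeff_eq_zero_of_natDegree_lt (lt_of_le_of_lt hSdegle hmn)
        omega
      have h1 : Φ S R = 0 := hΦTR S hSdeg
      have h2 : Φ S (mop n) = 0 := hΦTπ S hSdeg
      have hSS : Φ S S = 0 := by
        have hexp : Φ S S = Φ S R - β * Φ S (mop n) := by
          nth_rewrite 1 [hSdef]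
          rw [hΦsub, hΦsmul, hΦsym R S, hΦsym (mop n) S]
        rw [hexp, h1, h2, mul_zero, sub_zero]
      simp only [hΦ] at hSS
      have hnn : ∀ j ∈ Finset.univ, (0:ℝ) ≤ w j * (S.eval (lam j) * S.eval (lam j)) := by
        intro j _
        have hwnn : (0:ℝ) ≤ w j := by rw [hw]; exact sq_nonneg _
        exact mul_nonneg hwnn (mul_self_nonneg _)
      have hterm := (Finset.sum_eq_zero_iff_of_nonneg hnn).mp hSS
      obtain ⟨t, htc, hta⟩ := hatoms
      have hSx : ∀ y ∈ t, S.eval y = 0 := by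
        intro y hy
        obtain ⟨j, hj, hwj⟩ := hatomw y (hta y hy)
        have h := hterm j (Finset.mem_univ j)
        rw [hj] at h
        rcases mul_eq_zero.mp h with h' | h'
        · exact absurd h' hwj
        · exact mul_self_eq_zero.mp h'
      exact Polynomial.eq_zero_of_natDegree_lt_card_of_eval_eq_zero' S t hSx (by omega)
  have hReq : R = C β * mop n := by
    have := sub_eq_zero.mp hS0
    exact this
  have hβπ0 : β * (mop n).eval 0 = 1 := by
    have h := hR0
    rw [hReq] at h
    simpa [eval_mul, eval_C] using h
  have hπ0ne : (mop n).eval 0 ≠ 0 := by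
    intro h
    rw [h, mul_zero] at hβπ0
    exact zero_ne_one hβπ0
  -- value of Φ R R
  have hΦππ : Φ (mop n) (mop n) = c⁻¹ * c⁻¹ := by
    rw [← hπeq, hΦsmul, hΦsym, hΦsmul, hΦsym, hppn n le_rfl, mul_one]
  have hΦRR : Φ R R = β * β * (c⁻¹ * c⁻¹) := by
    rw [hReq, hΦsmul, hΦsym, hΦsmul, hΦsym, hΦππ]; ring
  -- leading coefficient product
  have hstep : ∀ m < n, (p m).leadingCoeff = b' m * (p (m + 1)).leadingCoeff := by
    intro m hm
    have h := congrArg (fun T : Polynomial ℝ => T.coeff (m + 1)) (hrec m hm)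
    rw [coeff_X_mul, coeff_add, coeff_add, coeff_C_mul, coeff_C_mul] at h
    have hm1 : (p m).coeff (m + 1) = 0 :=
      coeff_eq_zero_of_natDegree_lt (by rw [hdeg m (le_of_lt hm)]; omega)
    have hm2 : (p (m + 1)).coeff (m + 1) = (p (m + 1)).leadingCoeff := by
      rw [Polynomial.leadingCoeff, hdeg (m + 1) hm]
    have hm0 : (p m).coeff m = (p m).leadingCoeff := by
      rw [Polynomial.leadingCoeff, hdeg m (le_of_lt hm)]
    by_cases h0 : m = 0
    · subst h0
      rw [if_pos rfl, Polynomial.coeff_zero, hm0, hm1, hm2] at h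
      rw [h]; ring
    · rw [if_neg h0, coeff_C_mul, hm0, hm1, hm2] at h
      have hm3 : (p (m - 1)).coeff (m + 1) = 0 :=
        coeff_eq_zero_of_natDegree_lt (by rw [hdeg (m - 1) (by omega)]; omega)
      rw [hm3] at h
      rw [h]; ring
  have hlc0 : (p 0).leadingCoeff = 1 := by
    have hsumw : ∑ j, w j = 1 := by
      have h := hpar bvec bvec
      rw [hb] at h
      rw [← h]
      exact Finset.sum_congr rfl fun j _ => by rw [hw]; ring
    obtain ⟨c0, hc0eq⟩ : ∃ c0, p 0 = C c0 :=
      ⟨(p 0).coeff 0, eq_C_of_natDegree_le_zero (le_of_eq (hdeg 0 (Nat.zero_le n)))⟩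
    have hlcc : (p 0).leadingCoeff = c0 := by rw [hc0eq, leadingCoeff_C]
    have h1 := hppn 0 (Nat.zero_le n)
    have h2 : Φ (p 0) (p 0) = c0 * c0 := by
      simp only [hΦ, hc0eq, eval_C]
      rw [← Finset.sum_mul, hsumw, one_mul]
    rw [h2] at h1
    have hpos : 0 < c0 := hlcc ▸ hlead 0 (Nat.zero_le n)
    have hfac : (c0 - 1) * (c0 + 1) = 0 := by ring_nf; linarith
    rcases mul_eq_zero.mp hfac with h' | h'
    · rw [hlcc]; linarith
    · linarith
  have hprod : ∀ m, m ≤ n → (p m).leadingCoeff * ∏ j ∈ Finset.range m, b' j = 1 := by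
    intro m
    induction m with
    | zero => intro _; simpa using hlc0
    | succ e ih =>
      intro h
      rw [Finset.prod_range_succ]
      calc (p (e + 1)).leadingCoeff * ((∏ j ∈ Finset.range e, b' j) * b' e)
          = (b' e * (p (e + 1)).leadingCoeff) * ∏ j ∈ Finset.range e, b' j := by ring
        _ = (p e).leadingCoeff * ∏ j ∈ Finset.range e, b' j := by rw [← hstep e (by omega)]
        _ = 1 := ih (by omega)
  -- final assembly
  have hcB : c * ∏ j ∈ Finset.range n, b' j = 1 := hprod n le_rfl
  have hcinv : c⁻¹ = ∏ j ∈ Finset.range n, b' j := inv_eq_of_mul_eq_one_right hcB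
  have hβval : β = 1 / (mop n).eval 0 := eq_one_div_of_mul_eq_one_left (by linarith [hβπ0, mul_comm β ((mop n).eval 0)])
  rw [hRR, hΦRR, hβval, hcinv]
  rw [show (∏ j ∈ Finset.range n, (b' j) ^ 2) = (∏ j ∈ Finset.range n, b' j) ^ 2 by
    rw [← Finset.prod_pow]]
  field_simp
end

section
/- For the conjugate gradient algorithm, the ratio of consecutive residual norms equals the ratio of the Cholesky entries of the Jacobi matrix: ‖r_n‖₂ / ‖r_{n−1}‖₂ = β_{n−1}/α_{n−1}, where J(ν) = L L^T is the Cholesky factorization of the Jacobi matrix of the VESD ν with diagonal entries α_j and subdiagonal entries β_j of L. -/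
open MeasureTheory Polynomial Matrix

/-- The upper-left `n × n` block of the Jacobi matrix with diagonal `a` and off-diagonal `b`. -/
def jacobiBlock (a b : ℕ → ℝ) (n : ℕ) : Matrix (Fin n) (Fin n) ℝ :=
  Matrix.of fun i j =>
    if (i : ℕ) = (j : ℕ) then a (i : ℕ)
    else if (i : ℕ) + 1 = (j : ℕ) then b (i : ℕ)
    else if (j : ℕ) + 1 = (i : ℕ) then b (j : ℕ)
    else 0

/-- The `n × n` lower bidiagonal matrix with diagonal `α` and subdiagonal `β`. -/
def cholBlock (α β : ℕ → ℝ) (n : ℕ) : Matrix (Fin n) (Fin n) ℝ :=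
  Matrix.of fun i j =>
    if (i : ℕ) = (j : ℕ) then α (i : ℕ)
    else if (j : ℕ) + 1 = (i : ℕ) then β (j : ℕ)
    else 0

lemma quad_aux (c d : ℝ) (hd : 0 ≤ d) (h : ∀ t : ℝ, 0 ≤ t ^ 2 * d - 2 * t * c) : c = 0 := by
  rcases eq_or_lt_of_le hd with h0 | h0
  · have hc := h c
    nlinarith [sq_nonneg c]
  · have hc := h (c / d)
    have h1 : (c / d) ^ 2 * d = c ^ 2 / d := by field_simp
    have h2 : 2 * (c / d) * c = 2 * (c ^ 2 / d) := by field_simp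
    rw [h1, h2] at hc
    have : c ^ 2 / d ≤ 0 := by linarith
    have : c ^ 2 ≤ 0 := by
      by_contra hpos
      push_neg at hpos
      exact absurd (div_pos hpos h0) (by linarith)
    nlinarith


/-- Polynomials with degrees `0,…,m` and nonzero leading coefficients span all
polynomials of degree `< m+1`. -/
lemma poly_span (p : ℕ → Polynomial ℝ) :
    ∀ m : ℕ, (∀ k ≤ m, (p k).natDegree = k) → (∀ k ≤ m, (p k).leadingCoeff ≠ 0) →
    ∀ f : Polynomial ℝ, f.degree < ((m : ℕ) + 1 : ℕ) →
    ∃ t : ℕ → ℝ, f = ∑ k ∈ Finset.range (m + 1), Polynomial.C (t k) * p k := by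
  intro m
  induction m with
  | zero =>
    intro hdeg hlead f hf
    have hp0 : p 0 = Polynomial.C ((p 0).coeff 0) :=
      Polynomial.eq_C_of_natDegree_le_zero (le_of_eq (hdeg 0 le_rfl))
    have hc0 : (p 0).coeff 0 ≠ 0 := by
      have h1 := hlead 0 le_rfl
      rwa [Polynomial.leadingCoeff, hdeg 0 le_rfl] at h1
    have hf0 : f = Polynomial.C (f.coeff 0) := (Polynomial.eq_C_of_degree_le_zero
      (by simpa using Nat.WithBot.lt_one_iff_le_zero.mp (by exact_mod_cast hf)))
    refine ⟨fun _ => f.coeff 0 / (p 0).coeff 0, ?_⟩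
    rw [Finset.sum_range_one]
    conv_lhs => rw [hf0]
    conv_rhs => rw [hp0]
    rw [← Polynomial.C_mul]
    congr 1
    simp only [Polynomial.coeff_C_zero]
    field_simp
  | succ m ih =>
    intro hdeg hlead f hf
    set L := (p (m + 1)).coeff (m + 1) with hL
    have hLlead : (p (m + 1)).leadingCoeff = L := by
      rw [Polynomial.leadingCoeff, hdeg (m + 1) le_rfl]
    have hLne : L ≠ 0 := hLlead ▸ hlead (m + 1) le_rfl
    set g := f - Polynomial.C (f.coeff (m + 1) / L) * p (m + 1) with hg
    have hgdeg : g.degree < ((m : ℕ) + 1 : ℕ) := by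
      rw [Polynomial.degree_lt_iff_coeff_zero]
      intro k hk
      have hk' : (m : ℕ) + 1 ≤ k := by exact_mod_cast hk
      rcases eq_or_lt_of_le hk' with hk2 | hk2
      · simp only [hg, Polynomial.coeff_sub, Polynomial.coeff_C_mul, ← hk2]
        field_simp
        rw [← hL]; ring
      · have h1 : f.coeff k = 0 := Polynomial.coeff_eq_zero_of_degree_lt
          (lt_of_lt_of_le hf (by exact_mod_cast hk2))
        have h2 : (p (m + 1)).coeff k = 0 := Polynomial.coeff_eq_zero_of_natDegree_lt
          (by rw [hdeg (m + 1) le_rfl]; omega)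
        simp [hg, h1, h2]
    obtain ⟨t, ht⟩ := ih (fun k hk => hdeg k (by omega)) (fun k hk => hlead k (by omega)) g hgdeg
    refine ⟨fun k => if k = m + 1 then f.coeff (m + 1) / L else t k, ?_⟩
    rw [Finset.sum_range_succ]
    beta_reduce
    rw [if_pos rfl]
    have : ∑ k ∈ Finset.range (m + 1),
        Polynomial.C (if k = m + 1 then f.coeff (m + 1) / L else t k) * p k
        = ∑ k ∈ Finset.range (m + 1), Polynomial.C (t k) * p k := by
      apply Finset.sum_congr rfl
      intro k hk
      rw [if_neg (by simp at hk; omega)]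
    rw [this, ← ht, hg]
    ring


lemma chol_offdiag (α β a b' : ℕ → ℝ) (m i : ℕ) (h1 : i + 1 < m)
    (hchol : jacobiBlock a b' m = cholBlock α β m * (cholBlock α β m)ᵀ) :
    b' i = α i * β i := by
  have h2 : i < m := by omega
  have hJ : jacobiBlock a b' m ⟨i+1, h1⟩ ⟨i, h2⟩ = b' i := by
    simp only [jacobiBlock, Matrix.of_apply]
    split_ifs <;> first | rfl | (exfalso; omega)
  have hL : (cholBlock α β m * (cholBlock α β m)ᵀ) ⟨i+1, h1⟩ ⟨i, h2⟩ = α i * β i := by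
    rw [Matrix.mul_apply]
    have hpt : ∀ k : Fin m, cholBlock α β m ⟨i+1, h1⟩ k * (cholBlock α β m)ᵀ k ⟨i, h2⟩
        = if (k : ℕ) = i then α i * β i else 0 := by
      intro k
      simp only [cholBlock, Matrix.transpose_apply, Matrix.of_apply]
      split_ifs <;> first | ring1 | (exfalso; omega) | (subst_vars; ring1) | (subst_vars; exfalso; omega) | (exfalso; exact ‹False›)
    rw [Finset.sum_congr rfl (fun k _ => hpt k)]
    have : ∀ k : Fin m, (if (k : ℕ) = i then α i * β i else 0)
        = if k = ⟨i, h2⟩ then α i * β i else 0 := by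
      intro k; simp [Fin.ext_iff]
    rw [Finset.sum_congr rfl (fun k _ => this k), Finset.sum_ite_eq' Finset.univ]
    simp
  rw [hchol] at hJ
  rw [← hJ, hL]

lemma chol_diag_succ (α β a b' : ℕ → ℝ) (m i : ℕ) (h1 : i + 1 < m)
    (hchol : jacobiBlock a b' m = cholBlock α β m * (cholBlock α β m)ᵀ) :
    a (i + 1) = α (i + 1) ^ 2 + β i ^ 2 := by
  have hJ : jacobiBlock a b' m ⟨i+1, h1⟩ ⟨i+1, h1⟩ = a (i+1) := by
    simp only [jacobiBlock, Matrix.of_apply]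
    split_ifs <;> first | rfl | (exfalso; omega)
  have hL : (cholBlock α β m * (cholBlock α β m)ᵀ) ⟨i+1, h1⟩ ⟨i+1, h1⟩
      = α (i + 1) ^ 2 + β i ^ 2 := by
    rw [Matrix.mul_apply]
    have hpt : ∀ k : Fin m, cholBlock α β m ⟨i+1, h1⟩ k * (cholBlock α β m)ᵀ k ⟨i+1, h1⟩
        = (if k = (⟨i+1, h1⟩ : Fin m) then α (i+1) ^ 2 else 0)
          + (if k = (⟨i, by omega⟩ : Fin m) then β i ^ 2 else 0) := by
      intro k
      simp only [cholBlock, Matrix.transpose_apply, Matrix.of_apply, Fin.ext_iff]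
      split_ifs <;> first | ring1 | (exfalso; omega) | (subst_vars; ring1) | (subst_vars; exfalso; omega) | (exfalso; exact ‹False›)
    rw [Finset.sum_congr rfl (fun k _ => hpt k), Finset.sum_add_distrib,
      Finset.sum_ite_eq' Finset.univ, Finset.sum_ite_eq' Finset.univ]
    simp
  rw [hchol] at hJ
  rw [← hJ, hL]

lemma chol_diag_zero (α β a b' : ℕ → ℝ) (m : ℕ) (h1 : 0 < m)
    (hchol : jacobiBlock a b' m = cholBlock α β m * (cholBlock α β m)ᵀ) :
    a 0 = α 0 ^ 2 := by
  have hJ : jacobiBlock a b' m ⟨0, h1⟩ ⟨0, h1⟩ = a 0 := by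
    simp only [jacobiBlock, Matrix.of_apply]
    split_ifs <;> first | rfl | (exfalso; omega)
  have hL : (cholBlock α β m * (cholBlock α β m)ᵀ) ⟨0, h1⟩ ⟨0, h1⟩ = α 0 ^ 2 := by
    rw [Matrix.mul_apply]
    have hpt : ∀ k : Fin m, cholBlock α β m ⟨0, h1⟩ k * (cholBlock α β m)ᵀ k ⟨0, h1⟩
        = if k = (⟨0, h1⟩ : Fin m) then α 0 ^ 2 else 0 := by
      intro k
      simp only [cholBlock, Matrix.transpose_apply, Matrix.of_apply, Fin.ext_iff]
      split_ifs <;> first | ring1 | (exfalso; omega) | (subst_vars; ring1) | (subst_vars; exfalso; omega) | (exfalso; exact ‹False›)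
    rw [Finset.sum_congr rfl (fun k _ => hpt k), Finset.sum_ite_eq' Finset.univ]
    simp
  rw [hchol] at hJ
  rw [← hJ, hL]


lemma rec_solve (p : ℕ → Polynomial ℝ) (a b' α β : ℕ → ℝ) (n : ℕ)
    (hrec : ∀ k ≤ n, Polynomial.X * p k =
      Polynomial.C (a k) * p k + Polynomial.C (b' k) * p (k + 1) +
        (if k = 0 then 0 else Polynomial.C (b' (k - 1)) * p (k - 1)))
    (ha0 : 0 < n + 1 → a 0 = α 0 ^ 2)
    (hai : ∀ i, i + 1 ≤ n → a (i + 1) = α (i + 1) ^ 2 + β i ^ 2)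
    (hb : ∀ i ≤ n, b' i = α i * β i) :
    ∀ m ≤ n + 1, (p m).eval 0 * ∏ j ∈ Finset.range m, b' j
      = (-1 : ℝ) ^ m * (∏ j ∈ Finset.range m, α j ^ 2) * (p 0).eval 0 := by
  intro m
  induction m using Nat.twoStepInduction with
  | zero => intro _; simp
  | one =>
    intro h1
    have E := congrArg (Polynomial.eval 0) (hrec 0 (by omega))
    simp only [eval_mul, eval_add, eval_C, eval_X, if_pos rfl, ite_true, eval_zero, zero_mul, add_zero] at E
    have hA0 : a 0 = α 0 ^ 2 := ha0 (by omega)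
    simp only [Finset.prod_range_one, pow_one]
    linear_combination -E - (p 0).eval 0 * hA0
  | more m ih1 ih2 =>
    intro h2
    have hm1 : m + 1 ≤ n := by omega
    have E := congrArg (Polynomial.eval 0) (hrec (m + 1) hm1)
    simp only [eval_mul, eval_add, eval_C, eval_X, if_neg (Nat.succ_ne_zero m),
      Nat.add_sub_cancel, zero_mul] at E
    have IH2 := ih2 (by omega)  -- for m+1
    have IH1 := ih1 (by omega)  -- for m
    have hA := hai m hm1
    have hB := hb m (by omega)
    rw [Finset.prod_range_succ, Finset.prod_range_succ,
      Finset.prod_range_succ (fun j => α j ^ 2), Finset.prod_range_succ (fun j => α j ^ 2)]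
    rw [Finset.prod_range_succ, Finset.prod_range_succ (fun j => α j ^ 2)] at IH2
    linear_combination (-((∏ j ∈ Finset.range m, b' j) * b' m)) * E + (-(a (m+1))) * IH2 +
      (-(b' m ^ 2)) * IH1 +
      ((-1 : ℝ) ^ m * (∏ j ∈ Finset.range m, α j ^ 2) * (p 0).eval 0 * α m ^ 2) * hA +
      (-((-1 : ℝ) ^ m * (∏ j ∈ Finset.range m, α j ^ 2) * (p 0).eval 0 * (b' m + α m * β m))) * hB


lemma integral_formula {N : ℕ} (bvec lam : Fin N → ℝ) (q : Fin N → Fin N → ℝ)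
    (ν : Measure ℝ)
    (hν : ν = ∑ j : Fin N, (ENNReal.ofReal ((q j ⬝ᵥ bvec) ^ 2)) • Measure.dirac (lam j))
    (h : ℝ → ℝ) (hm : Measurable h) :
    ∫ t, h t ∂ν = ∑ j, (q j ⬝ᵥ bvec) ^ 2 * h (lam j) := by
  subst hν
  rw [integral_finset_sum_measure (fun j _ => Integrable.smul_measure
    ⟨hm.aestronglyMeasurable, by simp [HasFiniteIntegral, MeasureTheory.lintegral_dirac]⟩
    ENNReal.ofReal_ne_top)]
  refine Finset.sum_congr rfl fun j _ => ?_
  rw [integral_smul_measure, integral_dirac, ENNReal.toReal_ofReal (sq_nonneg _), smul_eq_mul]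

lemma eig_poly {N : ℕ} (W : Matrix (Fin N) (Fin N) ℝ) (lam : Fin N → ℝ)
    (q : Fin N → Fin N → ℝ) (heig : ∀ j, W.mulVec (q j) = lam j • q j)
    (f : Polynomial ℝ) (j : Fin N) :
    (Polynomial.aeval W f).mulVec (q j) = f.eval (lam j) • q j := by
  have hpow : ∀ k : ℕ, (W ^ k).mulVec (q j) = lam j ^ k • q j := by
    intro k
    induction k with
    | zero => simp
    | succ k ih =>
      rw [pow_succ, ← Matrix.mulVec_mulVec, heig, Matrix.mulVec_smul, ih, smul_smul, pow_succ]
      ring_nf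
  induction f using Polynomial.induction_on' with
  | add f g hf hg => rw [map_add, Matrix.add_mulVec, hf, hg, eval_add, add_smul]
  | monomial k c =>
    rw [Polynomial.aeval_monomial, ← Matrix.mulVec_mulVec, hpow,
      Algebra.algebraMap_eq_smul_one, Matrix.smul_mulVec, Matrix.one_mulVec,
      eval_monomial, smul_smul]

lemma basis_expand {N : ℕ} (q : Fin N → Fin N → ℝ)
    (horthq : ∀ i j, q i ⬝ᵥ q j = if i = j then (1 : ℝ) else 0)
    (v : Fin N → ℝ) : ∑ j, (q j ⬝ᵥ v) • q j = v := by
  have hQQ : (Matrix.of q) * (Matrix.of q)ᵀ = 1 := by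
    ext i j
    rw [Matrix.mul_apply, Matrix.one_apply]
    simpa [dotProduct] using horthq i j
  have hQQ' : (Matrix.of q)ᵀ * (Matrix.of q) = 1 := mul_eq_one_comm.mp hQQ
  funext i
  have hcol : ∀ k i : Fin N, (∑ j, q j k * q j i) = if k = i then (1:ℝ) else 0 := by
    intro k i
    have := congrFun (congrFun hQQ' k) i
    rw [Matrix.mul_apply, Matrix.one_apply] at this
    simpa [Matrix.transpose_apply, Matrix.of_apply] using this
  calc (∑ j, (q j ⬝ᵥ v) • q j) i = ∑ j, (∑ k, q j k * v k) * q j i := by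
        simp [dotProduct]
    _ = ∑ j, ∑ k, v k * (q j k * q j i) := by
        refine Finset.sum_congr rfl fun j _ => ?_
        rw [Finset.sum_mul]
        exact Finset.sum_congr rfl fun k _ => by ring
    _ = ∑ k, ∑ j, v k * (q j k * q j i) := Finset.sum_comm
    _ = ∑ k, v k * ∑ j, q j k * q j i := by
        refine Finset.sum_congr rfl fun k _ => ?_
        rw [Finset.mul_sum]
    _ = v i := by
        simp only [hcol]
        simp
lemma dot_formula {N : ℕ} (W : Matrix (Fin N) (Fin N) ℝ) (bvec lam : Fin N → ℝ)
    (q : Fin N → Fin N → ℝ) (heig : ∀ j, W.mulVec (q j) = lam j • q j)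
    (horthq : ∀ i j, q i ⬝ᵥ q j = if i = j then (1 : ℝ) else 0)
    (f g : Polynomial ℝ) :
    ((Polynomial.aeval W f).mulVec bvec) ⬝ᵥ ((Polynomial.aeval W g).mulVec bvec)
      = ∑ j, (q j ⬝ᵥ bvec) ^ 2 * (f.eval (lam j) * g.eval (lam j)) := by
  have hexp : ∀ h : Polynomial ℝ, (Polynomial.aeval W h).mulVec bvec
      = ∑ j, ((q j ⬝ᵥ bvec) * h.eval (lam j)) • q j := by
    intro h
    conv_lhs => rw [← basis_expand q horthq bvec]
    have : (Polynomial.aeval W h).mulVec (∑ j, (q j ⬝ᵥ bvec) • q j)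
        = ∑ j, (q j ⬝ᵥ bvec) • (Polynomial.aeval W h).mulVec (q j) := by
      rw [← Matrix.mulVecLin_apply, map_sum]
      simp [Matrix.mulVecLin_apply, Matrix.mulVec_smul]
    rw [this]
    refine Finset.sum_congr rfl fun j _ => ?_
    rw [eig_poly W lam q heig, smul_smul]
  have dot_sum_sum : ∀ (u w : Fin N → Fin N → ℝ),
      (∑ j, u j) ⬝ᵥ (∑ k, w k) = ∑ j, ∑ k, u j ⬝ᵥ w k := by
    intro u w
    calc (∑ j, u j) ⬝ᵥ (∑ k, w k) = ∑ x, (∑ j, u j x) * (∑ k, w k x) := by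
          simp [dotProduct]
      _ = ∑ x, ∑ j, ∑ k, u j x * w k x :=
          Finset.sum_congr rfl fun x _ => Finset.sum_mul_sum _ _ _ _
      _ = ∑ j, ∑ x, ∑ k, u j x * w k x := Finset.sum_comm
      _ = ∑ j, ∑ k, ∑ x, u j x * w k x := Finset.sum_congr rfl fun j _ => Finset.sum_comm
      _ = ∑ j, ∑ k, u j ⬝ᵥ w k := by simp [dotProduct]
  rw [hexp f, hexp g, dot_sum_sum]
  have : ∀ j k : Fin N, (((q j ⬝ᵥ bvec) * f.eval (lam j)) • q j) ⬝ᵥ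
      (((q k ⬝ᵥ bvec) * g.eval (lam k)) • q k)
      = if j = k then ((q j ⬝ᵥ bvec) * f.eval (lam j)) * ((q k ⬝ᵥ bvec) * g.eval (lam k)) else 0 := by
    intro j k
    rw [smul_dotProduct, dotProduct_smul, horthq j k]
    by_cases h : j = k <;> simp [h] <;> ring
  rw [Finset.sum_congr rfl (fun j _ => Finset.sum_congr rfl (fun k _ => this j k))]
  rw [Finset.sum_congr rfl (fun j (_ : j ∈ Finset.univ) => Finset.sum_ite_eq Finset.univ j _)]
  simp only [Finset.mem_univ, if_true]
  exact Finset.sum_congr rfl fun j _ => by ring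


lemma krylov_repr {N : ℕ} (W : Matrix (Fin N) (Fin N) ℝ) (bvec : Fin N → ℝ) (m : ℕ)
    (u : Fin N → ℝ)
    (hu : u ∈ Submodule.span ℝ {v : Fin N → ℝ | ∃ k < m, v = (W ^ k).mulVec bvec}) :
    ∃ g ∈ Polynomial.degreeLT ℝ m, u = (Polynomial.aeval W g).mulVec bvec := by
  induction hu using Submodule.span_induction with
  | mem v hv =>
    obtain ⟨k, hk, rfl⟩ := hv
    exact ⟨Polynomial.X ^ k, Polynomial.mem_degreeLT.mpr
      (by rw [Polynomial.degree_X_pow]; exact_mod_cast hk), by simp⟩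
  | zero => exact ⟨0, Submodule.zero_mem _, by simp⟩
  | add v w _ _ hv hw =>
    obtain ⟨g1, hg1, rfl⟩ := hv
    obtain ⟨g2, hg2, rfl⟩ := hw
    exact ⟨g1 + g2, Submodule.add_mem _ hg1 hg2, by rw [map_add, Matrix.add_mulVec]⟩
  | smul c v _ hv =>
    obtain ⟨g, hg, rfl⟩ := hv
    exact ⟨c • g, Submodule.smul_mem _ _ hg, by
      rw [_root_.map_smul, Matrix.smul_mulVec]⟩

lemma krylov_mem {N : ℕ} (W : Matrix (Fin N) (Fin N) ℝ) (bvec : Fin N → ℝ) (m : ℕ)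
    (g : Polynomial ℝ) (hg : g.degree < (m : ℕ)) :
    (Polynomial.aeval W g).mulVec bvec ∈
      Submodule.span ℝ {v : Fin N → ℝ | ∃ k < m, v = (W ^ k).mulVec bvec} := by
  by_cases hg0 : g = 0
  · simp [hg0]
  have hnd : g.natDegree < m := (Polynomial.natDegree_lt_iff_degree_lt hg0).mpr hg
  have hsum := Polynomial.as_sum_range' g m hnd
  have : (Polynomial.aeval W g).mulVec bvec
      = ∑ k ∈ Finset.range m, g.coeff k • (W ^ k).mulVec bvec := by
    conv_lhs => rw [hsum]
    rw [map_sum]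
    have : (∑ k ∈ Finset.range m, Polynomial.aeval W (Polynomial.monomial k (g.coeff k))).mulVec bvec
        = ∑ k ∈ Finset.range m, (Polynomial.aeval W (Polynomial.monomial k (g.coeff k))).mulVec bvec := by
      induction (Finset.range m) using Finset.cons_induction with
      | empty => simp [Matrix.zero_mulVec]
      | cons i s his ih => rw [Finset.sum_cons, Finset.sum_cons, Matrix.add_mulVec, ih]
    rw [this]
    refine Finset.sum_congr rfl fun k _ => ?_
    rw [Polynomial.aeval_monomial, Algebra.algebraMap_eq_smul_one, smul_mul_assoc, one_mul,
      Matrix.smul_mulVec]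
  rw [this]
  exact Submodule.sum_mem _ fun k hk => Submodule.smul_mem _ _
    (Submodule.subset_span ⟨k, Finset.mem_range.mp hk, rfl⟩)

lemma residual_orth {N : ℕ} (W : Matrix (Fin N) (Fin N) ℝ)
    (hWsym : W.IsSymm) (hWpd : W.PosDef) (bvec x xm : Fin N → ℝ)
    (hx : W.mulVec x = bvec) (K : Submodule ℝ (Fin N → ℝ)) (hxm : xm ∈ K)
    (hmin : ∀ y ∈ K, (x - xm) ⬝ᵥ W.mulVec (x - xm) ≤ (x - y) ⬝ᵥ W.mulVec (x - y))
    (u : Fin N → ℝ) (hu : u ∈ K) : (bvec - W.mulVec xm) ⬝ᵥ u = 0 := by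
  set e := x - xm with he
  have hsymdot : ∀ v w : Fin N → ℝ, v ⬝ᵥ W.mulVec w = W.mulVec v ⬝ᵥ w := by
    intro v w
    rw [Matrix.dotProduct_mulVec, ← Matrix.mulVec_transpose, hWsym]
  have key : W.mulVec e ⬝ᵥ u = 0 := by
    apply quad_aux _ (u ⬝ᵥ W.mulVec u) (hWpd.posSemidef.dotProduct_mulVec_nonneg u)
    intro t
    have hy : xm + t • u ∈ K := K.add_mem hxm (K.smul_mem t hu)
    have hle := hmin _ hy
    have hexp : x - (xm + t • u) = e - t • u := by rw [he]; abel
    rw [hexp] at hle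
    have hexpand : (e - t • u) ⬝ᵥ W.mulVec (e - t • u)
        = e ⬝ᵥ W.mulVec e - 2 * t * (W.mulVec e ⬝ᵥ u) + t ^ 2 * (u ⬝ᵥ W.mulVec u) := by
      rw [Matrix.mulVec_sub, Matrix.mulVec_smul]
      rw [sub_dotProduct, dotProduct_sub, dotProduct_sub,
        smul_dotProduct, dotProduct_smul, dotProduct_smul]
      have h1 : e ⬝ᵥ W.mulVec u = W.mulVec e ⬝ᵥ u := hsymdot e u
      have h2 : u ⬝ᵥ W.mulVec e = W.mulVec e ⬝ᵥ u :=
        dotProduct_comm u (W.mulVec e)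
      rw [h1, h2]
      simp only [smul_dotProduct, dotProduct_smul, smul_eq_mul]
      ring
    rw [hexpand] at hle
    linarith
  have hres : bvec - W.mulVec xm = W.mulVec e := by
    rw [he, Matrix.mulVec_sub, hx]
  rw [hres]
  exact key

lemma matsum_mulVec {N : ℕ} {ι : Type*} (s : Finset ι) (A : ι → Matrix (Fin N) (Fin N) ℝ)
    (v : Fin N → ℝ) : (∑ i ∈ s, A i).mulVec v = ∑ i ∈ s, (A i).mulVec v := by
  induction s using Finset.cons_induction with
  | empty => simp [Matrix.zero_mulVec]
  | cons i s his ih => rw [Finset.sum_cons, Finset.sum_cons, Matrix.add_mulVec, ih]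

lemma sum_dot {N : ℕ} {ι : Type*} (s : Finset ι) (u : ι → Fin N → ℝ) (w : Fin N → ℝ) :
    (∑ j ∈ s, u j) ⬝ᵥ w = ∑ j ∈ s, u j ⬝ᵥ w := by
  induction s using Finset.cons_induction with
  | empty => simp
  | cons i s his ih => rw [Finset.sum_cons, Finset.sum_cons, add_dotProduct, ih]


/-- for the conjugate gradient algorithm, the ratio of consecutive residual
norms equals the ratio of Cholesky entries of the Jacobi matrix of the VESD `ν`:
`‖r_{n+1}‖₂ / ‖r_n‖₂ = β_n / α_n`, where `J(ν) = L Lᵀ` with `L` lower bidiagonal having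
diagonal `α_j > 0` and subdiagonal `β_j`. -/
theorem stmt9
    (N : ℕ) (W : Matrix (Fin N) (Fin N) ℝ)
    (hWsym : W.IsSymm) (hWpd : W.PosDef)
    (bvec : Fin N → ℝ) (hb : bvec ⬝ᵥ bvec = 1)
    (lam : Fin N → ℝ) (q : Fin N → Fin N → ℝ)
    (heig : ∀ j, W.mulVec (q j) = lam j • q j)
    (horthq : ∀ i j, q i ⬝ᵥ q j = if i = j then (1 : ℝ) else 0)
    (ν : Measure ℝ)
    (hν : ν = ∑ j : Fin N, (ENNReal.ofReal ((q j ⬝ᵥ bvec) ^ 2)) • Measure.dirac (lam j))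
    (n : ℕ)
    (hatoms : ∃ t : Finset ℝ, n + 2 ≤ t.card ∧ ∀ x ∈ t, ν {x} ≠ 0)
    -- orthonormal polynomials `p` of `ν` with recurrence coefficients `a`, `b'`
    (p : ℕ → Polynomial ℝ) (a b' : ℕ → ℝ)
    (hdeg : ∀ k ≤ n + 1, (p k).natDegree = k)
    (hlead : ∀ k ≤ n + 1, 0 < (p k).leadingCoeff)
    (horthp : ∀ k ≤ n + 1, ∀ m ≤ n + 1, k ≠ m → ∫ t, (p k).eval t * (p m).eval t ∂ν = 0)
    (hnorm : ∀ k ≤ n + 1, ∫ t, (p k).eval t ^ 2 ∂ν = 1)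
    (hbpos : ∀ k ≤ n, 0 < b' k)
    (hrec : ∀ k ≤ n, Polynomial.X * p k =
      Polynomial.C (a k) * p k + Polynomial.C (b' k) * p (k + 1) +
        (if k = 0 then 0 else Polynomial.C (b' (k - 1)) * p (k - 1)))
    -- Cholesky factorization of the Jacobi matrix: `J_m(ν) = L_m L_mᵀ` for every block size
    (α β : ℕ → ℝ) (hα : ∀ j, 0 < α j)
    (hchol : ∀ m, jacobiBlock a b' m = cholBlock α β m * (cholBlock α β m)ᵀ)
    -- the CG iterates at steps `n` and `n+1`
    (x xn xn1 : Fin N → ℝ)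
    (hx : W.mulVec x = bvec)
    (hxnmem : xn ∈ Submodule.span ℝ {v : Fin N → ℝ | ∃ k < n, v = (W ^ k).mulVec bvec})
    (hxnmin : ∀ y ∈ Submodule.span ℝ {v : Fin N → ℝ | ∃ k < n, v = (W ^ k).mulVec bvec},
      (x - xn) ⬝ᵥ W.mulVec (x - xn) ≤ (x - y) ⬝ᵥ W.mulVec (x - y))
    (hxn1mem : xn1 ∈ Submodule.span ℝ {v : Fin N → ℝ | ∃ k < n + 1, v = (W ^ k).mulVec bvec})
    (hxn1min : ∀ y ∈ Submodule.span ℝ {v : Fin N → ℝ | ∃ k < n + 1, v = (W ^ k).mulVec bvec},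
      (x - xn1) ⬝ᵥ W.mulVec (x - xn1) ≤ (x - y) ⬝ᵥ W.mulVec (x - y)) :
    Real.sqrt ((bvec - W.mulVec xn1) ⬝ᵥ (bvec - W.mulVec xn1)) /
        Real.sqrt ((bvec - W.mulVec xn) ⬝ᵥ (bvec - W.mulVec xn)) =
      β n / α n := by
  -- orthonormality of the vectors `p k (W) b`
  have hpne : ∀ k ≤ n + 1, p k ≠ 0 := fun k hk =>
    Polynomial.leadingCoeff_ne_zero.mp (ne_of_gt (hlead k hk))
  have hVorth : ∀ k ≤ n + 1, ∀ l ≤ n + 1,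
      ((Polynomial.aeval W (p k)).mulVec bvec) ⬝ᵥ ((Polynomial.aeval W (p l)).mulVec bvec)
        = if k = l then (1 : ℝ) else 0 := by
    intro k hk l hl
    rw [dot_formula W bvec lam q heig horthq]
    have hint := integral_formula bvec lam q ν hν (fun t => (p k).eval t * (p l).eval t)
      (((p k).continuous_aeval).measurable.mul ((p l).continuous_aeval).measurable)
    by_cases hkl : k = l
    · subst hkl
      rw [if_pos rfl, ← hint]
      have := hnorm k hk
      simpa [pow_two] using this
    · rw [if_neg hkl, ← hint]
      exact horthp k hk l hl hkl
  -- the key representation of the residual at step `m`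
  have main : ∀ m : ℕ, m ≤ n + 1 → ∀ xm : Fin N → ℝ,
      xm ∈ Submodule.span ℝ {v : Fin N → ℝ | ∃ k < m, v = (W ^ k).mulVec bvec} →
      (∀ y ∈ Submodule.span ℝ {v : Fin N → ℝ | ∃ k < m, v = (W ^ k).mulVec bvec},
        (x - xm) ⬝ᵥ W.mulVec (x - xm) ≤ (x - y) ⬝ᵥ W.mulVec (x - y)) →
      ∃ t : ℝ, (bvec - W.mulVec xm) = t • ((Polynomial.aeval W (p m)).mulVec bvec)
        ∧ t * (p m).eval 0 = 1 := by
    intro m hm xm hxmmem hxmmin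
    obtain ⟨g, hgLT, hgeq⟩ := krylov_repr W bvec m xm hxmmem
    have hg : g.degree < (m : ℕ) := Polynomial.mem_degreeLT.mp hgLT
    set f : Polynomial ℝ := 1 - Polynomial.X * g with hf
    have hres : bvec - W.mulVec xm = (Polynomial.aeval W f).mulVec bvec := by
      rw [hgeq, hf, map_sub, _root_.map_one, _root_.map_mul, Polynomial.aeval_X, Matrix.sub_mulVec,
        Matrix.one_mulVec, ← Matrix.mulVec_mulVec]
    have hfdeg : f.degree < ((m + 1 : ℕ) : WithBot ℕ) := by
      rw [Polynomial.degree_lt_iff_coeff_zero]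
      intro k hk
      have hk' : m + 1 ≤ k := by exact_mod_cast hk
      obtain ⟨j, rfl⟩ : ∃ j, k = j + 1 := ⟨k - 1, by omega⟩
      have hgj : g.coeff j = 0 := Polynomial.coeff_eq_zero_of_degree_lt
        (lt_of_lt_of_le hg (by exact_mod_cast (by omega : m ≤ j)))
      rw [hf, Polynomial.coeff_sub, Polynomial.coeff_one, Polynomial.coeff_X_mul, hgj]
      simp
    obtain ⟨t, ht⟩ := poly_span p m (fun k hk => hdeg k (hk.trans hm))
      (fun k hk => ne_of_gt (hlead k (hk.trans hm))) f hfdeg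
    have hres2 : bvec - W.mulVec xm
        = ∑ k ∈ Finset.range (m + 1), t k • ((Polynomial.aeval W (p k)).mulVec bvec) := by
      rw [hres, ht, map_sum, matsum_mulVec]
      refine Finset.sum_congr rfl fun k _ => ?_
      rw [_root_.map_mul, Polynomial.aeval_C, Algebra.algebraMap_eq_smul_one, smul_mul_assoc, one_mul,
        Matrix.smul_mulVec]
    have hORTH := residual_orth W hWsym hWpd bvec x xm hx _ hxmmem hxmmin
    have htzero : ∀ k, k < m → t k = 0 := by
      intro k hk
      have hk1 : k ≤ n + 1 := by omega
      have hpk : (p k).degree < (m : ℕ) := by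
        rw [Polynomial.degree_eq_natDegree (hpne k hk1), hdeg k hk1]
        exact_mod_cast hk
      have hvmem := krylov_mem W bvec m (p k) hpk
      have h0 := hORTH _ hvmem
      rw [hres2, sum_dot] at h0
      have hterm : ∀ l ∈ Finset.range (m + 1),
          (t l • ((Polynomial.aeval W (p l)).mulVec bvec)) ⬝ᵥ
            ((Polynomial.aeval W (p k)).mulVec bvec)
          = if l = k then t l else 0 := by
        intro l hl
        rw [smul_dotProduct, hVorth l (by simp at hl; omega) k hk1, smul_eq_mul,
          mul_ite, mul_one, mul_zero]
      rw [Finset.sum_congr rfl hterm, Finset.sum_ite_eq' (Finset.range (m + 1))] at h0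
      simpa [Finset.mem_range, Nat.lt_succ_of_lt hk] using h0
    have hresm : bvec - W.mulVec xm = t m • ((Polynomial.aeval W (p m)).mulVec bvec) := by
      rw [hres2, Finset.sum_range_succ]
      have : ∀ k ∈ Finset.range m, t k • ((Polynomial.aeval W (p k)).mulVec bvec) = 0 := by
        intro k hk
        rw [htzero k (Finset.mem_range.mp hk), zero_smul]
      rw [Finset.sum_congr rfl this, Finset.sum_const_zero, zero_add]
    have hf0 : f.eval 0 = 1 := by simp [hf]
    have hfsum : f.eval 0 = ∑ k ∈ Finset.range (m + 1), t k * (p k).eval 0 := by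
      rw [ht, Polynomial.eval_finset_sum]
      exact Finset.sum_congr rfl fun k _ => by rw [Polynomial.eval_mul, Polynomial.eval_C]
    have htm : t m * (p m).eval 0 = 1 := by
      rw [hfsum, Finset.sum_range_succ] at hf0
      have : ∀ k ∈ Finset.range m, t k * (p k).eval 0 = 0 := by
        intro k hk
        rw [htzero k (Finset.mem_range.mp hk), zero_mul]
      rw [Finset.sum_congr rfl this, Finset.sum_const_zero, zero_add] at hf0
      exact hf0
    exact ⟨t m, hresm, htm⟩
  obtain ⟨t1, hres1, ht1⟩ := main n (by omega) xn hxnmem hxnmin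
  obtain ⟨t2, hres2, ht2⟩ := main (n + 1) le_rfl xn1 hxn1mem hxn1min
  -- the norms of the residuals
  have hnorm1 : Real.sqrt ((bvec - W.mulVec xn) ⬝ᵥ (bvec - W.mulVec xn)) = |t1| := by
    rw [hres1, smul_dotProduct, dotProduct_smul, hVorth n (by omega) n (by omega),
      if_pos rfl, smul_eq_mul, smul_eq_mul, mul_one, ← pow_two, Real.sqrt_sq_eq_abs]
  have hnorm2 : Real.sqrt ((bvec - W.mulVec xn1) ⬝ᵥ (bvec - W.mulVec xn1)) = |t2| := by
    rw [hres2, smul_dotProduct, dotProduct_smul, hVorth (n+1) le_rfl (n+1) le_rfl,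
      if_pos rfl, smul_eq_mul, smul_eq_mul, mul_one, ← pow_two, Real.sqrt_sq_eq_abs]
  set cn := (p n).eval 0 with hcn
  set cn1 := (p (n + 1)).eval 0 with hcn1
  have hcnne : cn ≠ 0 := fun h => by rw [h, mul_zero] at ht1; exact zero_ne_one ht1
  have hcn1ne : cn1 ≠ 0 := fun h => by rw [h, mul_zero] at ht2; exact zero_ne_one ht2
  have ht1' : t1 = cn⁻¹ := eq_inv_of_mul_eq_one_left (by rw [mul_comm] at ht1 ⊢; exact ht1)
  have ht2' : t2 = cn1⁻¹ := eq_inv_of_mul_eq_one_left (by rw [mul_comm] at ht2 ⊢; exact ht2)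
  -- solve the three-term recurrence at 0 using the Cholesky entries
  have hsolve := rec_solve p a b' α β n hrec
    (fun _ => chol_diag_zero α β a b' (n + 2) (by omega) (hchol (n + 2)))
    (fun i hi => chol_diag_succ α β a b' (n + 2) i (by omega) (hchol (n + 2)))
    (fun i hi => chol_offdiag α β a b' (n + 2) i (by omega) (hchol (n + 2)))
  have Hn := hsolve n (by omega)
  have Hn1 := hsolve (n + 1) le_rfl
  set c0 := (p 0).eval 0 with hc0
  set Bn := ∏ j ∈ Finset.range n, b' j with hBn
  set An := ∏ j ∈ Finset.range n, α j ^ 2 with hAn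
  have hBnpos : 0 < Bn := Finset.prod_pos fun j hj => hbpos j (by simp at hj; omega)
  have hAnpos : 0 < An := Finset.prod_pos fun j hj => pow_pos (hα j) 2
  rw [Finset.prod_range_succ, Finset.prod_range_succ] at Hn1
  -- Hn : cn * Bn = (-1)^n * An * c0
  -- Hn1 : cn1 * (Bn * b' n) = (-1)^(n+1) * (An * α n ^ 2) * c0
  have hc0ne : c0 ≠ 0 := by
    intro h
    rw [h, mul_zero] at Hn1
    rcases mul_eq_zero.mp Hn1 with h1 | h2
    · exact hcn1ne h1
    · exact ne_of_gt (mul_pos hBnpos (hbpos n le_rfl)) h2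
  -- take absolute values
  have habs1 : |cn| * Bn = An * |c0| := by
    have h := congrArg abs Hn
    simp only [abs_mul, abs_pow, abs_neg, abs_one, one_pow, one_mul, abs_of_pos hBnpos,
      abs_of_pos hAnpos] at h
    exact h
  have habs2 : |cn1| * (Bn * b' n) = An * α n ^ 2 * |c0| := by
    have h := congrArg abs Hn1
    simp only [abs_mul, abs_pow, abs_neg, abs_one, one_pow, one_mul, abs_of_pos hBnpos,
      abs_of_pos hAnpos, abs_of_pos (hα n), abs_of_pos (hbpos n le_rfl)] at h
    rw [← hBn, ← hAn, abs_of_pos hBnpos, abs_of_pos hAnpos] at h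
    linear_combination h
  have hbn : b' n = α n * β n := chol_offdiag α β a b' (n + 2) n (by omega) (hchol (n + 2))
  have hcnabs : |cn| ≠ 0 := abs_ne_zero.mpr hcnne
  have hcn1abs : |cn1| ≠ 0 := abs_ne_zero.mpr hcn1ne
  rw [hnorm1, hnorm2, ht1', ht2', abs_inv, abs_inv, inv_div_inv]
  rw [div_eq_div_iff hcn1abs (ne_of_gt (hα n))]
  apply mul_right_cancel₀ (ne_of_gt (mul_pos hBnpos (hbpos n le_rfl)))
  linear_combination (α n * b' n) * habs1 - β n * habs2 + (An * |c0| * α n) * hbn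
end

section
/- Spiked resolvent reduction formula: let Σ_0 be positive definite N×N, V_r an N×r matrix with orthonormal columns consisting of eigenvectors of Σ_0, D = diag(d_1,...,d_r) with d_i > 0, and Σ = Σ_0^{1/2}(I + V_r D V_r*)Σ_0^{1/2}-type spiked covariance with spectral perturbation Σ = Σ_0 + Σ_0^{1/2} V_r D V_r* Σ_0^{1/2}. Let X be N×M, G_1(z) = (Σ_0^{1/2} X X* Σ_0^{1/2} − z)^{-1} and G̃_1(z) = (Σ^{1/2} X X* Σ^{1/2} − z)^{-1}. Then G̃_1(z) = Σ^{-1/2}Σ_0^{1/2} [ G_1(z) − z G_1(z) V_r (D^{-1} + I + z V_r* G_1(z) V_r)^{-1} V_r* G_1(z) ] Σ_0^{1/2}Σ^{-1/2}, provided z is not an eigenvalue of either sample covariance matrix and D^{-1} + I + z V_r* G_1(z) V_r is invertible. -/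
open Matrix
open scoped ComplexOrder

set_option maxHeartbeats 1000000 in
/-- spiked resolvent reduction / rank-r Woodbury identity: with
`Σ = Sig0^{1/2}(I + V_r D V_rᴴ)Sig0^{1/2}` a spiked covariance built from the positive definite
`Sig0` (whose square root is `Shalf`, and `Thalf` is the square root of `Σ`), `V_r` an `N×r`
matrix of orthonormal eigenvectors of `Sig0`, `D = diag(d₁,…,d_r)` with `d_i > 0`,
`G₁(z) = (Sig0^{1/2} X Xᴴ Sig0^{1/2} − z)⁻¹` and `G̃₁(z) = (Σ^{1/2} X Xᴴ Σ^{1/2} − z)⁻¹`, one has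
`G̃₁(z) = Σ^{-1/2}Sig0^{1/2}[G₁ − z G₁ V_r (D⁻¹ + I + z V_rᴴ G₁ V_r)⁻¹ V_rᴴ G₁]Sig0^{1/2}Σ^{-1/2}`,
provided `z` is not an eigenvalue of either sample covariance matrix and
`D⁻¹ + I + z V_rᴴ G₁ V_r` is invertible. -/
theorem stmt13
    (N M r : ℕ)
    (Sig0 Shalf Sigm Thalf : Matrix (Fin N) (Fin N) ℂ)
    (X : Matrix (Fin N) (Fin M) ℂ)
    (Vr : Matrix (Fin N) (Fin r) ℂ)
    (σr : Fin r → ℂ) (d : Fin r → ℝ) (z : ℂ)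
    (hSig0pd : Sig0.PosDef)
    (hShalf : Shalf.IsHermitian) (hShalfsq : Shalf * Shalf = Sig0)
    (hVorth : Vrᴴ * Vr = 1)
    (hVeig : Sig0 * Vr = Vr * Matrix.diagonal σr)
    (hd : ∀ i, 0 < d i)
    (hSigm : Sigm = Shalf * (1 + Vr * Matrix.diagonal (fun i => (d i : ℂ)) * Vrᴴ) * Shalf)
    (hThalf : Thalf.IsHermitian) (hThalfsq : Thalf * Thalf = Sigm)
    (hThalfinv : Thalf.det ≠ 0)
    (hz1 : (Shalf * X * Xᴴ * Shalf - z • (1 : Matrix (Fin N) (Fin N) ℂ)).det ≠ 0)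
    (hz2 : (Thalf * X * Xᴴ * Thalf - z • (1 : Matrix (Fin N) (Fin N) ℂ)).det ≠ 0)
    (hinv : ((Matrix.diagonal (fun i => (d i : ℂ)))⁻¹ + 1 +
        z • (Vrᴴ * (Shalf * X * Xᴴ * Shalf - z • (1 : Matrix (Fin N) (Fin N) ℂ))⁻¹ * Vr)).det ≠ 0) :
    (Thalf * X * Xᴴ * Thalf - z • (1 : Matrix (Fin N) (Fin N) ℂ))⁻¹ =
      Thalf⁻¹ * Shalf *
        ((Shalf * X * Xᴴ * Shalf - z • (1 : Matrix (Fin N) (Fin N) ℂ))⁻¹ -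
          z • ((Shalf * X * Xᴴ * Shalf - z • (1 : Matrix (Fin N) (Fin N) ℂ))⁻¹ * Vr *
            ((Matrix.diagonal (fun i => (d i : ℂ)))⁻¹ + 1 +
              z • (Vrᴴ * (Shalf * X * Xᴴ * Shalf - z • (1 : Matrix (Fin N) (Fin N) ℂ))⁻¹ * Vr))⁻¹ *
            Vrᴴ * (Shalf * X * Xᴴ * Shalf - z • (1 : Matrix (Fin N) (Fin N) ℂ))⁻¹)) *
        Shalf * Thalf⁻¹ := by
  classical
  set Dm : Matrix (Fin r) (Fin r) ℂ := Matrix.diagonal (fun i => (d i : ℂ)) with hDm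
  set A : Matrix (Fin N) (Fin N) ℂ :=
    Shalf * X * Xᴴ * Shalf - z • (1 : Matrix (Fin N) (Fin N) ℂ) with hAdef
  set G : Matrix (Fin N) (Fin N) ℂ := A⁻¹ with hGdef
  set K : Matrix (Fin r) (Fin r) ℂ := Dm⁻¹ + 1 + z • (Vrᴴ * G * Vr) with hKdef
  -- scalar facts
  have hdC : ∀ i, (d i : ℂ) ≠ 0 := fun i => by
    exact_mod_cast (hd i).ne'
  have hdC1 : ∀ i, ((d i : ℂ)⁻¹ + 1) ≠ 0 := fun i => by
    have hdi := hd i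
    have h : ((d i)⁻¹ + 1 : ℝ) ≠ 0 := by positivity
    have : ((d i : ℂ)⁻¹ + 1) = (((d i)⁻¹ + 1 : ℝ) : ℂ) := by push_cast; ring
    rw [this]
    exact_mod_cast h
  -- invertibility facts
  have hSdet : Shalf.det ≠ 0 := by
    have h := congrArg Matrix.det hShalfsq
    rw [Matrix.det_mul] at h
    have h0 : Sig0.det ≠ 0 := hSig0pd.det_pos.ne'
    intro hs; rw [hs, mul_zero] at h; exact h0 h.symm
  have hSS' : Shalf * Shalf⁻¹ = 1 := Matrix.mul_nonsing_inv _ (isUnit_iff_ne_zero.2 hSdet)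
  have hS'S : Shalf⁻¹ * Shalf = 1 := Matrix.nonsing_inv_mul _ (isUnit_iff_ne_zero.2 hSdet)
  have hTT' : Thalf * Thalf⁻¹ = 1 := Matrix.mul_nonsing_inv _ (isUnit_iff_ne_zero.2 hThalfinv)
  have hT'T : Thalf⁻¹ * Thalf = 1 := Matrix.nonsing_inv_mul _ (isUnit_iff_ne_zero.2 hThalfinv)
  have hAG : A * G = 1 := Matrix.mul_nonsing_inv _ (isUnit_iff_ne_zero.2 hz1)
  have hKK' : K * K⁻¹ = 1 := Matrix.mul_nonsing_inv _ (isUnit_iff_ne_zero.2 hinv)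
  -- diagonal matrix E
  set E : Matrix (Fin r) (Fin r) ℂ :=
    Matrix.diagonal (fun i => ((d i : ℂ)⁻¹ + 1)⁻¹) with hEdef
  have hDminv : Dm⁻¹ = Matrix.diagonal (fun i => (d i : ℂ)⁻¹) := by
    apply Matrix.inv_eq_right_inv
    rw [hDm, Matrix.diagonal_mul_diagonal, ← Matrix.diagonal_one]
    exact congrArg Matrix.diagonal (funext fun i => mul_inv_cancel₀ (hdC i))
  have hDinvdiag : Dm⁻¹ + 1 = Matrix.diagonal (fun i => (d i : ℂ)⁻¹ + 1) := by
    rw [hDminv, ← Matrix.diagonal_one, Matrix.diagonal_add]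
  have hED : E * (Dm⁻¹ + 1) = 1 := by
    rw [hDinvdiag, hEdef, Matrix.diagonal_mul_diagonal, ← Matrix.diagonal_one]
    exact congrArg Matrix.diagonal (funext fun i => inv_mul_cancel₀ (hdC1 i))
  have hDE : Dm = E + Dm * E := by
    rw [hDm, hEdef, Matrix.diagonal_mul_diagonal, Matrix.diagonal_add]
    refine congrArg Matrix.diagonal (funext fun i => ?_)
    have h1 := hdC i
    have h2 := hdC1 i
    have h3 : (1 + (d i : ℂ)) ≠ 0 := by
      have hdi := hd i
      have hr : (1 + d i : ℝ) ≠ 0 := by positivity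
      have : (1 + (d i : ℂ)) = ((1 + d i : ℝ) : ℂ) := by push_cast; ring
      rw [this]
      exact_mod_cast hr
    field_simp
  -- (1 + Vr Dm Vrᴴ)(1 - Vr E Vrᴴ) = 1
  have hprod : (1 + Vr * Dm * Vrᴴ) * (1 - Vr * E * Vrᴴ) = 1 := by
    have h1 : Vr * Dm * Vrᴴ * (Vr * E * Vrᴴ) = Vr * (Dm * E) * Vrᴴ := by
      calc Vr * Dm * Vrᴴ * (Vr * E * Vrᴴ)
          = Vr * Dm * (Vrᴴ * Vr) * (E * Vrᴴ) := by
            simp only [Matrix.mul_assoc]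
        _ = Vr * (Dm * E) * Vrᴴ := by
            rw [hVorth, Matrix.mul_one]
            simp only [Matrix.mul_assoc]
    have hexp : (1 + Vr * Dm * Vrᴴ) * (1 - Vr * E * Vrᴴ)
        = 1 - Vr * E * Vrᴴ + (Vr * Dm * Vrᴴ - Vr * (Dm * E) * Vrᴴ) := by
      rw [add_mul, one_mul, mul_sub, mul_one, h1]
    rw [hexp]
    have : Vr * Dm * Vrᴴ = Vr * E * Vrᴴ + Vr * (Dm * E) * Vrᴴ := by
      nth_rewrite 1 [hDE]
      rw [Matrix.mul_add, Matrix.add_mul]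
    rw [this]
    abel
  -- Thalf * (Shalf⁻¹ (1 - VrEVrᴴ) Shalf⁻¹) * Thalf = 1
  have hTQT : Thalf * (Shalf⁻¹ * (1 - Vr * E * Vrᴴ) * Shalf⁻¹) * Thalf = 1 := by
    have hSig : Sigm * (Shalf⁻¹ * (1 - Vr * E * Vrᴴ) * Shalf⁻¹) = 1 := by
      rw [hSigm]
      calc Shalf * (1 + Vr * Dm * Vrᴴ) * Shalf * (Shalf⁻¹ * (1 - Vr * E * Vrᴴ) * Shalf⁻¹)
          = Shalf * (1 + Vr * Dm * Vrᴴ) * (Shalf * Shalf⁻¹) * (1 - Vr * E * Vrᴴ) * Shalf⁻¹ := by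
            simp only [Matrix.mul_assoc]
        _ = Shalf * ((1 + Vr * Dm * Vrᴴ) * (1 - Vr * E * Vrᴴ)) * Shalf⁻¹ := by
            rw [hSS', Matrix.mul_one]
            simp only [Matrix.mul_assoc]
        _ = 1 := by rw [hprod, Matrix.mul_one, hSS']
    have hTT : Thalf * Thalf * (Shalf⁻¹ * (1 - Vr * E * Vrᴴ) * Shalf⁻¹) = 1 := by
      rw [hThalfsq]; exact hSig
    have hTinv : Thalf⁻¹ = Thalf * (Shalf⁻¹ * (1 - Vr * E * Vrᴴ) * Shalf⁻¹) :=
      Matrix.inv_eq_right_inv (by rw [← Matrix.mul_assoc]; exact hTT)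
    calc Thalf * (Shalf⁻¹ * (1 - Vr * E * Vrᴴ) * Shalf⁻¹) * Thalf
        = Thalf⁻¹ * Thalf := by rw [← hTinv]
      _ = 1 := hT'T
  -- factorization of B
  have hBfact : Thalf * X * Xᴴ * Thalf - z • (1 : Matrix (Fin N) (Fin N) ℂ)
      = Thalf * Shalf⁻¹ * (A + z • (Vr * E * Vrᴴ)) * Shalf⁻¹ * Thalf := by
    have h1 : A + z • (Vr * E * Vrᴴ)
        = Shalf * X * Xᴴ * Shalf - z • (1 - Vr * E * Vrᴴ) := by
      rw [hAdef, smul_sub]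
      abel
    rw [h1]
    rw [Matrix.mul_sub, Matrix.sub_mul, Matrix.sub_mul]
    have e1 : Thalf * Shalf⁻¹ * (Shalf * X * Xᴴ * Shalf) * Shalf⁻¹ * Thalf
        = Thalf * X * Xᴴ * Thalf := by
      calc Thalf * Shalf⁻¹ * (Shalf * X * Xᴴ * Shalf) * Shalf⁻¹ * Thalf
          = Thalf * ((Shalf⁻¹ * Shalf) * (X * (Xᴴ * ((Shalf * Shalf⁻¹) * Thalf)))) := by
            simp only [Matrix.mul_assoc]
        _ = Thalf * X * Xᴴ * Thalf := by
            rw [hS'S, hSS', Matrix.one_mul, Matrix.one_mul]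
            simp only [Matrix.mul_assoc]
    have e2 : Thalf * Shalf⁻¹ * (z • (1 - Vr * E * Vrᴴ)) * Shalf⁻¹ * Thalf
        = z • (1 : Matrix (Fin N) (Fin N) ℂ) := by
      calc Thalf * Shalf⁻¹ * (z • (1 - Vr * E * Vrᴴ)) * Shalf⁻¹ * Thalf
          = z • (Thalf * (Shalf⁻¹ * (1 - Vr * E * Vrᴴ) * Shalf⁻¹) * Thalf) := by
            rw [Matrix.mul_smul, Matrix.smul_mul, Matrix.smul_mul]
            simp only [Matrix.mul_assoc]
        _ = z • (1 : Matrix (Fin N) (Fin N) ℂ) := by rw [hTQT]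
    rw [e1, e2]
  -- core Woodbury identity
  have hEK : E * K = 1 + z • (E * (Vrᴴ * G * Vr)) := by
    rw [hKdef, mul_add, hED, mul_smul_comm]
  have hkey : E - z • (E * (Vrᴴ * G * Vr) * K⁻¹) = K⁻¹ := by
    have h2 : (1 + z • (E * (Vrᴴ * G * Vr))) * K⁻¹
        = K⁻¹ + z • (E * (Vrᴴ * G * Vr) * K⁻¹) := by
      rw [add_mul, one_mul, Matrix.smul_mul]
    have h3 : E = K⁻¹ + z • (E * (Vrᴴ * G * Vr) * K⁻¹) := by
      rw [← h2, ← hEK, Matrix.mul_assoc, hKK', Matrix.mul_one]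
    nth_rewrite 1 [h3]
    abel
  have hcore : (A + z • (Vr * E * Vrᴴ)) * (G - z • (G * Vr * K⁻¹ * Vrᴴ * G)) = 1 := by
    have e1 : A * (G * Vr * K⁻¹ * Vrᴴ * G) = Vr * K⁻¹ * (Vrᴴ * G) := by
      calc A * (G * Vr * K⁻¹ * Vrᴴ * G) = (A * G) * (Vr * (K⁻¹ * (Vrᴴ * G))) := by
            simp only [Matrix.mul_assoc]
        _ = Vr * K⁻¹ * (Vrᴴ * G) := by rw [hAG, Matrix.one_mul]; simp only [Matrix.mul_assoc]
    have e2 : Vr * E * Vrᴴ * (G * Vr * K⁻¹ * Vrᴴ * G)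
        = Vr * (E * (Vrᴴ * G * Vr) * K⁻¹) * (Vrᴴ * G) := by
      simp only [Matrix.mul_assoc]
    have hexp : (A + z • (Vr * E * Vrᴴ)) * (G - z • (G * Vr * K⁻¹ * Vrᴴ * G))
        = A * G - z • (A * (G * Vr * K⁻¹ * Vrᴴ * G)) + (z • (Vr * E * Vrᴴ * G)
            - z • (z • (Vr * E * Vrᴴ * (G * Vr * K⁻¹ * Vrᴴ * G)))) := by
      rw [add_mul, mul_sub, Matrix.mul_smul, Matrix.smul_mul, Matrix.mul_sub, Matrix.mul_smul,
        smul_sub]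
    rw [hexp, hAG, e1, e2]
    have e3 : Vr * E * Vrᴴ * G = Vr * E * (Vrᴴ * G) := by simp only [Matrix.mul_assoc]
    rw [e3]
    have e4 : Vr * K⁻¹ * (Vrᴴ * G)
        = Vr * E * (Vrᴴ * G) - z • (Vr * (E * (Vrᴴ * G * Vr) * K⁻¹) * (Vrᴴ * G)) := by
      have e5 : Vr * (E - z • (E * (Vrᴴ * G * Vr) * K⁻¹)) * (Vrᴴ * G)
          = Vr * E * (Vrᴴ * G) - z • (Vr * (E * (Vrᴴ * G * Vr) * K⁻¹) * (Vrᴴ * G)) := by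
        rw [Matrix.mul_sub, Matrix.mul_smul, Matrix.sub_mul, Matrix.smul_mul]
      rw [← e5, hkey]
    rw [e4]
    rw [smul_sub]
    abel
  -- assembly
  apply Matrix.inv_eq_right_inv
  rw [hBfact]
  calc Thalf * Shalf⁻¹ * (A + z • (Vr * E * Vrᴴ)) * Shalf⁻¹ * Thalf *
        (Thalf⁻¹ * Shalf * (G - z • (G * Vr * K⁻¹ * Vrᴴ * G)) * Shalf * Thalf⁻¹)
      = Thalf * Shalf⁻¹ * ((A + z • (Vr * E * Vrᴴ)) *
          (Shalf⁻¹ * ((Thalf * Thalf⁻¹) * Shalf) *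
            ((G - z • (G * Vr * K⁻¹ * Vrᴴ * G)) * (Shalf * Thalf⁻¹)))) := by
        simp only [Matrix.mul_assoc]
    _ = Thalf * Shalf⁻¹ * ((A + z • (Vr * E * Vrᴴ)) *
          ((G - z • (G * Vr * K⁻¹ * Vrᴴ * G)) * (Shalf * Thalf⁻¹))) := by
        rw [hTT', Matrix.one_mul, hS'S, Matrix.one_mul]
    _ = Thalf * Shalf⁻¹ * (Shalf * Thalf⁻¹) := by
        rw [← Matrix.mul_assoc (A + z • (Vr * E * Vrᴴ)), hcore, Matrix.one_mul]
    _ = 1 := by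
        rw [← Matrix.mul_assoc, Matrix.mul_assoc Thalf, hS'S, Matrix.mul_one, hTT']
end

section
/- For the function γ(z) = [∏_{j=1}^{g+1} (z−b_j)/(z−a_j)]^{1/4} defined and analytic on ℂ \ ∪_j [a_j,b_j], normalized so γ(z) → 1 as z → ∞ (with a_1 < b_1 < a_2 < ... < a_{g+1} < b_{g+1} real), the function γ + γ^{-1} does not vanish on ℂ \ ∪_j [a_j,b_j], while γ − γ^{-1} has exactly one root in each gap (b_j, a_{j+1}) for j = 1,...,g. -/
open Filter Topology Polynomial Finset

namespace Stmt17

variable {g : ℕ} {a b : ℕ → ℝ}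

lemma chain_ba (hab : ∀ j ≤ g, a j < b j) (hgap : ∀ j < g, b j < a (j + 1)) :
    ∀ i k, i < k → k ≤ g → b i < a k := by
  intro i k
  induction k with
  | zero => omega
  | succ n ih =>
    intro hik hkg
    rcases Nat.lt_succ_iff_lt_or_eq.mp hik with h | h
    · exact lt_trans (lt_trans (ih h (by omega)) (hab n (by omega))) (hgap n (by omega))
    · subst h; exact hgap i (by omega)

lemma chain_bb (hab : ∀ j ≤ g, a j < b j) (hgap : ∀ j < g, b j < a (j + 1)) :
    ∀ i k, i ≤ k → k ≤ g → b i ≤ b k := by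
  intro i k hik hkg
  rcases eq_or_lt_of_le hik with h | h
  · subst h; rfl
  · exact le_of_lt (lt_trans (chain_ba hab hgap i k h hkg) (hab k hkg))

lemma chain_aa (hab : ∀ j ≤ g, a j < b j) (hgap : ∀ j < g, b j < a (j + 1)) :
    ∀ i k, i ≤ k → k ≤ g → a i ≤ a k := by
  intro i k hik hkg
  rcases eq_or_lt_of_le hik with h | h
  · subst h; rfl
  · exact le_of_lt (lt_trans (hab i (by omega)) (chain_ba hab hgap i k h hkg))

lemma root4 (w : ℂ) (hw : w ^ 4 = 1) :
    w = 1 ∨ w = -1 ∨ w = Complex.I ∨ w = -Complex.I := by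
  have h : (w - 1) * ((w + 1) * ((w - Complex.I) * (w + Complex.I))) = 0 := by
    linear_combination hw - (w ^ 2 - 1) * Complex.I_sq
  rcases mul_eq_zero.mp h with h1 | h1
  · exact Or.inl (by linear_combination h1)
  · rcases mul_eq_zero.mp h1 with h2 | h2
    · right; left; linear_combination h2
    · rcases mul_eq_zero.mp h2 with h3 | h3
      · right; right; left; linear_combination h3
      · right; right; right; linear_combination h3

lemma count (hab : ∀ j ≤ g, a j < b j) (hgap : ∀ j < g, b j < a (j + 1)) :
    ∀ s : Finset ℂ, (∀ x ∈ s, (∏ j ∈ Finset.range (g+1), (x - (b j:ℂ)))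
      = ∏ j ∈ Finset.range (g+1), (x - (a j:ℂ))) → s.card ≤ g := by
  set Qc : Polynomial ℂ := (∏ j ∈ Finset.range (g+1), (X - C ((b j : ℂ))))
    - ∏ j ∈ Finset.range (g+1), (X - C ((a j:ℂ))) with hQ
  have heval : ∀ z : ℂ, Qc.eval z = (∏ j ∈ Finset.range (g+1), (z - (b j:ℂ)))
      - ∏ j ∈ Finset.range (g+1), (z - (a j:ℂ)) := by
    intro z; simp [hQ, eval_prod]
  have hne : Qc ≠ 0 := by
    intro h0
    have h1 := heval (b 0 : ℂ)
    rw [h0, eval_zero] at h1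
    rw [Finset.prod_eq_zero (i := 0) (Finset.mem_range.mpr (by omega)) (by simp), zero_sub] at h1
    have h2 : (∏ j ∈ Finset.range (g+1), ((b 0 : ℂ) - (a j:ℂ))) ≠ 0 := by
      rw [Finset.prod_ne_zero_iff]
      intro j hj
      rw [sub_ne_zero]
      have : b 0 ≠ a j := by
        rcases Nat.eq_zero_or_pos j with h | h
        · subst h; exact (hab 0 (by omega)).ne'
        · exact ne_of_lt (chain_ba hab hgap 0 j h (by
            have := Finset.mem_range.mp hj; omega))
      exact_mod_cast this
    exact h2 (neg_eq_zero.mp h1.symm)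
  have hm1 : (∏ j ∈ Finset.range (g+1), (X - C ((b j:ℂ)))).Monic :=
    monic_prod_of_monic _ _ (fun i _ => monic_X_sub_C _)
  have hm2 : (∏ j ∈ Finset.range (g+1), (X - C ((a j:ℂ)))).Monic :=
    monic_prod_of_monic _ _ (fun i _ => monic_X_sub_C _)
  have hd1 : (∏ j ∈ Finset.range (g+1), (X - C ((b j:ℂ)))).natDegree = g+1 := by
    rw [natDegree_prod _ _ (fun i _ => X_sub_C_ne_zero _)]
    simp [natDegree_X_sub_C]
  have hd2 : (∏ j ∈ Finset.range (g+1), (X - C ((a j:ℂ)))).natDegree = g+1 := by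
    rw [natDegree_prod _ _ (fun i _ => X_sub_C_ne_zero _)]
    simp [natDegree_X_sub_C]
  have hdeg : Qc.natDegree ≤ g := by
    have hlt : Qc.degree < ((g+1 : ℕ) : WithBot ℕ) := by
      have h := Polynomial.degree_sub_lt
        (p := ∏ j ∈ Finset.range (g+1), (X - C ((b j:ℂ))))
        (q := ∏ j ∈ Finset.range (g+1), (X - C ((a j:ℂ))))
        (by rw [Polynomial.degree_eq_natDegree hm1.ne_zero,
            Polynomial.degree_eq_natDegree hm2.ne_zero, hd1, hd2])
        hm1.ne_zero
        (by rw [hm1.leadingCoeff, hm2.leadingCoeff])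
      rw [Polynomial.degree_eq_natDegree hm1.ne_zero, hd1] at h
      rw [hQ]
      exact h
    have := (Polynomial.natDegree_lt_iff_degree_lt (n := g+1) hne).mpr hlt
    omega
  intro s hs
  have hsub : s ⊆ Qc.roots.toFinset := by
    intro x hx
    rw [Multiset.mem_toFinset, mem_roots hne]
    rw [IsRoot, heval x, sub_eq_zero]
    exact hs x hx
  calc s.card ≤ Qc.roots.toFinset.card := Finset.card_le_card hsub
    _ ≤ Multiset.card Qc.roots := Qc.roots.toFinset_card_le
    _ ≤ Qc.natDegree := Qc.card_roots'
    _ ≤ g := hdeg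

lemma ivt (hab : ∀ j ≤ g, a j < b j) (hgap : ∀ j < g, b j < a (j + 1))
    {j : ℕ} (hj : j < g) :
    ∃ r ∈ Set.Ioo (b j) (a (j+1)), (∏ i ∈ Finset.range (g+1), (r - b i))
      = ∏ i ∈ Finset.range (g+1), (r - a i) := by
  set f : ℝ → ℝ := fun x => (∏ i ∈ Finset.range (g+1), (x - b i))
    - ∏ i ∈ Finset.range (g+1), (x - a i) with hf
  have hcont : Continuous f := by
    apply Continuous.sub <;>
      exact continuous_finset_prod _ (fun i _ => continuous_id.sub continuous_const)
  have h1 : f (b j) = -∏ i ∈ Finset.range (g+1), (b j - a i) := by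
    have hz : (∏ i ∈ Finset.range (g+1), (b j - b i)) = 0 :=
      Finset.prod_eq_zero (i := j) (Finset.mem_range.mpr (by omega)) (sub_self _)
    rw [hf]
    simp only
    rw [hz, zero_sub]
  have h2 : f (a (j+1)) = ∏ i ∈ Finset.range (g+1), (a (j+1) - b i) := by
    have hz : (∏ i ∈ Finset.range (g+1), (a (j+1) - a i)) = 0 :=
      Finset.prod_eq_zero (i := j+1) (Finset.mem_range.mpr (by omega)) (sub_self _)
    rw [hf]
    simp only
    rw [hz, sub_zero]
  have hposmul : 0 < ∏ i ∈ Finset.range (g+1), ((b j - a i) * (a (j+1) - b i)) := by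
    apply Finset.prod_pos
    intro i hi
    rw [Finset.mem_range, Nat.lt_succ_iff] at hi
    rcases le_or_gt i j with h | h
    · have h1' : a i < b j := lt_of_le_of_lt (chain_aa hab hgap i j h (le_of_lt hj)) (hab j (by omega))
      have h2' : b i < a (j+1) := lt_of_le_of_lt (chain_bb hab hgap i j h (by omega)) (hgap j hj)
      exact mul_pos (by linarith) (by linarith)
    · have h1' : b j < a i := chain_ba hab hgap j i h hi
      have h2' : a (j+1) ≤ a i := chain_aa hab hgap (j+1) i h hi
      have h3' : a i < b i := hab i hi
      exact mul_pos_of_neg_of_neg (by linarith) (by linarith)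
  rw [Finset.prod_mul_distrib] at hposmul
  have hlt : b j ≤ a (j+1) := le_of_lt (hgap j hj)
  rcases lt_trichotomy (f (b j)) 0 with hneg | hzero | hpos
  · have hpos2 : 0 < f (a (j+1)) := by rw [h2]; rw [h1] at hneg; nlinarith
    obtain ⟨r, hr, hr0⟩ := intermediate_value_Ioo hlt hcont.continuousOn ⟨hneg, hpos2⟩
    exact ⟨r, hr, sub_eq_zero.mp hr0⟩
  · exfalso
    rw [h1] at hzero
    have : (∏ i ∈ Finset.range (g+1), (b j - a i)) = 0 := by linarith [neg_eq_zero.mp hzero]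
    rw [this, zero_mul] at hposmul
    exact lt_irrefl 0 hposmul
  · have hneg2 : f (a (j+1)) < 0 := by rw [h2]; rw [h1] at hpos; nlinarith
    obtain ⟨r, hr, hr0⟩ := intermediate_value_Ioo' hlt hcont.continuousOn ⟨hneg2, hpos⟩
    exact ⟨r, hr, sub_eq_zero.mp hr0⟩

variable {bands : Set ℂ}

lemma mem_bands (hbands : bands = ⋃ j ∈ Finset.range (g + 1), (Complex.ofReal '' Set.Icc (a j) (b j)))
    {z : ℂ} (hz : z ∈ bands) : ∃ j ≤ g, ∃ x : ℝ, x ∈ Set.Icc (a j) (b j) ∧ (x:ℂ) = z := by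
  rw [hbands] at hz
  simp only [Set.mem_iUnion, Finset.mem_range, Set.mem_image] at hz
  obtain ⟨j, hj, x, hx, hxz⟩ := hz
  exact ⟨j, by omega, x, hx, hxz⟩

lemma real_mem_bands (hbands : bands = ⋃ j ∈ Finset.range (g + 1), (Complex.ofReal '' Set.Icc (a j) (b j)))
    {x : ℝ} : (x:ℂ) ∈ bands ↔ ∃ j ≤ g, x ∈ Set.Icc (a j) (b j) := by
  constructor
  · intro hx
    obtain ⟨j, hj, y, hy, hyx⟩ := mem_bands hbands hx
    exact ⟨j, hj, by rwa [Complex.ofReal_inj.mp hyx] at hy⟩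
  · rintro ⟨j, hj, hx⟩
    rw [hbands]
    simp only [Set.mem_iUnion, Finset.mem_range, Set.mem_image]
    exact ⟨j, by omega, x, hx, rfl⟩

lemma bands_im_re (hab : ∀ j ≤ g, a j < b j) (hgap : ∀ j < g, b j < a (j + 1))
    (hbands : bands = ⋃ j ∈ Finset.range (g + 1), (Complex.ofReal '' Set.Icc (a j) (b j)))
    {z : ℂ} (hz : z ∈ bands) : z.im = 0 ∧ z.re ≤ b g := by
  obtain ⟨j, hj, x, hx, rfl⟩ := mem_bands hbands hz
  refine ⟨Complex.ofReal_im x, ?_⟩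
  rw [Complex.ofReal_re]
  exact le_trans hx.2 (chain_bb hab hgap j g hj le_rfl)

lemma gap_mem_compl (hab : ∀ j ≤ g, a j < b j) (hgap : ∀ j < g, b j < a (j + 1))
    (hbands : bands = ⋃ j ∈ Finset.range (g + 1), (Complex.ofReal '' Set.Icc (a j) (b j)))
    {j : ℕ} (hj : j < g) {x : ℝ} (hx : x ∈ Set.Ioo (b j) (a (j+1))) : (x:ℂ) ∈ bandsᶜ := by
  intro hmem
  obtain ⟨i, hi, hxi⟩ := (real_mem_bands hbands).mp hmem
  rcases le_or_gt i j with h | h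
  · have h1 : b i ≤ b j := chain_bb hab hgap i j h (by omega)
    have := hxi.2
    have := hx.1
    linarith
  · have h1 : a (j+1) ≤ a i := chain_aa hab hgap (j+1) i h hi
    have := hxi.1
    have := hx.2
    linarith

lemma endpoint_a_mem (hab : ∀ j ≤ g, a j < b j)
    (hbands : bands = ⋃ j ∈ Finset.range (g + 1), (Complex.ofReal '' Set.Icc (a j) (b j)))
    {j : ℕ} (hj : j ≤ g) : ((a j : ℝ):ℂ) ∈ bands :=
  (real_mem_bands hbands).mpr ⟨j, hj, le_rfl, le_of_lt (hab j hj)⟩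

lemma endpoint_b_mem (hab : ∀ j ≤ g, a j < b j)
    (hbands : bands = ⋃ j ∈ Finset.range (g + 1), (Complex.ofReal '' Set.Icc (a j) (b j)))
    {j : ℕ} (hj : j ≤ g) : ((b j : ℝ):ℂ) ∈ bands :=
  (real_mem_bands hbands).mpr ⟨j, hj, le_of_lt (hab j hj), le_rfl⟩

lemma prod_a_ne (hab : ∀ j ≤ g, a j < b j)
    (hbands : bands = ⋃ j ∈ Finset.range (g + 1), (Complex.ofReal '' Set.Icc (a j) (b j)))
    {z : ℂ} (hz : z ∈ bandsᶜ) :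
    (∏ j ∈ Finset.range (g + 1), (z - (a j : ℂ))) ≠ 0 := by
  rw [Finset.prod_ne_zero_iff]
  intro j hj
  rw [Finset.mem_range, Nat.lt_succ_iff] at hj
  rw [sub_ne_zero]
  intro h; exact hz (h ▸ endpoint_a_mem hab hbands hj)

lemma prod_ne (hab : ∀ j ≤ g, a j < b j)
    (hbands : bands = ⋃ j ∈ Finset.range (g + 1), (Complex.ofReal '' Set.Icc (a j) (b j)))
    {z : ℂ} (hz : z ∈ bandsᶜ) :
    (∏ j ∈ Finset.range (g + 1), ((z - (b j : ℂ)) / (z - (a j : ℂ)))) ≠ 0 := by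
  rw [Finset.prod_ne_zero_iff]
  intro j hj
  rw [Finset.mem_range, Nat.lt_succ_iff] at hj
  apply div_ne_zero <;> rw [sub_ne_zero]
  · intro h; exact hz (h ▸ endpoint_b_mem hab hbands hj)
  · intro h; exact hz (h ▸ endpoint_a_mem hab hbands hj)

lemma preconn (hab : ∀ j ≤ g, a j < b j) (hgap : ∀ j < g, b j < a (j + 1))
    (hbands : bands = ⋃ j ∈ Finset.range (g + 1), (Complex.ofReal '' Set.Icc (a j) (b j))) :
    IsPreconnected bandsᶜ := by
  set V : Set ℂ := {z | z.im ≠ 0 ∨ b g < z.re} with hV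
  have hVsub : V ⊆ bandsᶜ := by
    intro z hz hzb
    obtain ⟨him, hre⟩ := bands_im_re hab hgap hbands hzb
    rcases hz with h | h
    · exact h him
    · linarith
  have hVconn : IsPreconnected V := by
    have hVeq : V = ({z : ℂ | z.im < 0} ∪ {z : ℂ | b g < z.re}) ∪ {z : ℂ | 0 < z.im} := by
      ext z
      simp only [hV, Set.mem_setOf_eq, Set.mem_union]
      constructor
      · rintro (h | h)
        · rcases lt_or_gt_of_ne h with h' | h'
          · exact Or.inl (Or.inl h')
          · exact Or.inr h'
        · exact Or.inl (Or.inr h)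
      · rintro ((h | h) | h)
        · exact Or.inl (ne_of_lt h)
        · exact Or.inr h
        · exact Or.inl (ne_of_gt h)
    rw [hVeq]
    have hm1 : ((b g + 1 : ℝ):ℂ) - Complex.I ∈ {z : ℂ | z.im < 0} := by
      simp [Set.mem_setOf_eq]
    have hm2 : ((b g + 1 : ℝ):ℂ) - Complex.I ∈ {z : ℂ | b g < z.re} := by
      simp [Set.mem_setOf_eq]
    have hm3 : ((b g + 1 : ℝ):ℂ) + Complex.I ∈ {z : ℂ | b g < z.re} := by
      simp [Set.mem_setOf_eq]
    have hm4 : ((b g + 1 : ℝ):ℂ) + Complex.I ∈ {z : ℂ | 0 < z.im} := by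
      simp [Set.mem_setOf_eq]
    exact IsPreconnected.union (((b g + 1 : ℝ):ℂ) + Complex.I) (Or.inr hm3) hm4
      (IsPreconnected.union (((b g + 1 : ℝ):ℂ) - Complex.I) hm1 hm2
        (convex_halfSpace_im_lt 0).isPreconnected
        (convex_halfSpace_re_gt (b g)).isPreconnected)
      (convex_halfSpace_im_gt 0).isPreconnected
  apply isPreconnected_of_forall (((b g + 1 : ℝ)):ℂ)
  intro y hy
  by_cases hyV : y ∈ V
  · refine ⟨V, hVsub, Or.inr ?_, hyV, hVconn⟩
    simp only [Complex.ofReal_re]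
    linarith
  · simp only [hV, Set.mem_setOf_eq, not_or, not_lt, ne_eq, not_not] at hyV
    obtain ⟨hyim, _⟩ := hyV
    refine ⟨V ∪ segment ℝ y (y + Complex.I), ?_, Or.inl (Or.inr (by
      simp only [Complex.ofReal_re]; linarith)), Or.inr (left_mem_segment ℝ _ _), ?_⟩
    · apply Set.union_subset hVsub
      intro w hw
      obtain ⟨s, t, hs, ht, hst, rfl⟩ := hw
      by_cases ht0 : t = 0
      · subst ht0
        have hs1 : s = 1 := by linarith
        subst hs1
        simpa using hy
      · apply hVsub
        left
        have : (s • y + t • (y + Complex.I)).im = t := by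
          simp [Complex.add_im, Complex.smul_im, hyim]
        rw [this]
        exact ht0
    · exact IsPreconnected.union (y + Complex.I)
        (Or.inl (by simp [hV, Set.mem_setOf_eq, Complex.add_im, hyim]))
        (right_mem_segment ℝ _ _) hVconn (convex_segment _ _).isPreconnected

lemma conj_mem_compl (hbands : bands = ⋃ j ∈ Finset.range (g + 1), (Complex.ofReal '' Set.Icc (a j) (b j)))
    {z : ℂ} (hz : z ∈ bandsᶜ) : (starRingEnd ℂ) z ∈ bandsᶜ := by
  intro hc
  obtain ⟨j, hj, x, hx, hxz⟩ := mem_bands hbands hc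
  apply hz
  have hzx : (x:ℂ) = z := by
    have := congrArg (starRingEnd ℂ) hxz
    rwa [Complex.conj_ofReal, Complex.conj_conj] at this
  exact hzx ▸ (real_mem_bands hbands).mpr ⟨j, hj, hx⟩

lemma gamma_ne (hab : ∀ j ≤ g, a j < b j)
    (hbands : bands = ⋃ j ∈ Finset.range (g + 1), (Complex.ofReal '' Set.Icc (a j) (b j)))
    (γ : ℂ → ℂ)
    (hγpow : ∀ z ∈ bandsᶜ, (γ z) ^ 4 = ∏ j ∈ Finset.range (g + 1),
      ((z - (b j : ℂ)) / (z - (a j : ℂ))))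
    {z : ℂ} (hz : z ∈ bandsᶜ) : γ z ≠ 0 := by
  intro h0
  have h4 := hγpow z hz
  rw [h0] at h4
  exact prod_ne hab hbands hz (by simpa using h4.symm)

lemma reflect (hab : ∀ j ≤ g, a j < b j) (hgap : ∀ j < g, b j < a (j + 1))
    (hbands : bands = ⋃ j ∈ Finset.range (g + 1), (Complex.ofReal '' Set.Icc (a j) (b j)))
    (γ : ℂ → ℂ)
    (hγdiff : DifferentiableOn ℂ γ bandsᶜ)
    (hγpow : ∀ z ∈ bandsᶜ, (γ z) ^ 4 = ∏ j ∈ Finset.range (g + 1),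
      ((z - (b j : ℂ)) / (z - (a j : ℂ))))
    (hγlim : Tendsto γ (Bornology.cobounded ℂ) (𝓝 1)) :
    ∀ z ∈ bandsᶜ, (starRingEnd ℂ) (γ ((starRingEnd ℂ) z)) = γ z := by
  set h : ℂ → ℂ := fun z => γ z * ((starRingEnd ℂ) (γ ((starRingEnd ℂ) z)))⁻¹ with hdefh
  have hγc : ContinuousOn γ bandsᶜ := hγdiff.continuousOn
  have hden : ∀ z ∈ bandsᶜ, (starRingEnd ℂ) (γ ((starRingEnd ℂ) z)) ≠ 0 := by
    intro z hz h0
    have h0' : γ ((starRingEnd ℂ) z) = 0 := by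
      simpa using congrArg (starRingEnd ℂ) h0
    exact gamma_ne hab hbands γ hγpow (conj_mem_compl hbands hz) h0'
  have hcont : ContinuousOn h bandsᶜ := by
    apply ContinuousOn.mul hγc
    apply ContinuousOn.inv₀
    · exact Complex.continuous_conj.comp_continuousOn
        (hγc.comp Complex.continuous_conj.continuousOn (fun z hz => conj_mem_compl hbands hz))
    · exact hden
  have hpow4 : ∀ z ∈ bandsᶜ, (h z) ^ 4 = 1 := by
    intro z hz
    have h1 := hγpow z hz
    have h2 := hγpow _ (conj_mem_compl hbands hz)
    have h3 : ((starRingEnd ℂ) (γ ((starRingEnd ℂ) z))) ^ 4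
        = ∏ j ∈ Finset.range (g + 1), ((z - (b j : ℂ)) / (z - (a j : ℂ))) := by
      rw [← map_pow, h2, map_prod]
      apply Finset.prod_congr rfl
      intro j hj
      rw [map_div₀, map_sub, map_sub, Complex.conj_conj, Complex.conj_ofReal,
        Complex.conj_ofReal]
    rw [hdefh]
    simp only
    rw [mul_pow, inv_pow, h1, h3]
    exact mul_inv_cancel₀ (prod_ne hab hbands hz)
  have hcast : Tendsto (fun n : ℕ => ((n:ℝ):ℂ)) atTop (Bornology.cobounded ℂ) := by
    rw [← tendsto_norm_atTop_iff_cobounded]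
    simp only [Complex.norm_real, Real.norm_natCast]
    exact tendsto_natCast_atTop_atTop
  have hγn : Tendsto (fun n : ℕ => γ ((n:ℝ):ℂ)) atTop (𝓝 1) := hγlim.comp hcast
  have hγnc : Tendsto (fun n : ℕ => (starRingEnd ℂ) (γ ((n:ℝ):ℂ))) atTop (𝓝 1) := by
    have := (Complex.continuous_conj.tendsto 1).comp hγn
    simpa [Function.comp_def] using this
  have hhn : Tendsto (fun n : ℕ => h ((n:ℝ):ℂ)) atTop (𝓝 1) := by
    have heq : (fun n : ℕ => h ((n:ℝ):ℂ))
        = fun n : ℕ => γ ((n:ℝ):ℂ) * ((starRingEnd ℂ) (γ ((n:ℝ):ℂ)))⁻¹ := by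
      funext n
      rw [hdefh]
      simp only [Complex.conj_ofReal]
    rw [heq]
    simpa using hγn.mul (hγnc.inv₀ one_ne_zero)
  have hmem : ∀ᶠ n : ℕ in atTop, ((n:ℝ):ℂ) ∈ bandsᶜ := by
    have : ∀ᶠ n : ℕ in atTop, b g < (n:ℝ) :=
      tendsto_natCast_atTop_atTop.eventually (eventually_gt_atTop (b g))
    filter_upwards [this] with n hn hc
    have := (bands_im_re hab hgap hbands hc).2
    rw [Complex.ofReal_re] at this
    linarith
  have hre : ∀ᶠ n : ℕ in atTop, h ((n:ℝ):ℂ) ∈ {w : ℂ | (1:ℝ)/2 < w.re} := by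
    apply hhn.eventually_mem
    apply (isOpen_lt continuous_const Complex.continuous_re).mem_nhds
    simp only [Set.mem_setOf_eq, Complex.one_re]
    norm_num
  obtain ⟨n, hn1, hn2⟩ := (hmem.and hre).exists
  rw [Set.mem_setOf_eq] at hn2
  have hval : h ((n:ℝ):ℂ) = 1 := by
    rcases root4 _ (hpow4 _ hn1) with hh | hh | hh | hh
    · exact hh
    · rw [hh] at hn2
      simp only [Complex.neg_re, Complex.one_re] at hn2
      norm_num at hn2
    · rw [hh] at hn2
      simp only [Complex.I_re] at hn2
      norm_num at hn2
    · rw [hh] at hn2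
      simp only [Complex.neg_re, Complex.I_re] at hn2
      norm_num at hn2
  have hconst : ∀ z ∈ bandsᶜ, h z = 1 := by
    by_contra hcon
    push_neg at hcon
    obtain ⟨z₀, hz₀, hz₀ne⟩ := hcon
    have himg := (preconn hab hgap hbands).image h hcont
    have hU : IsOpen {w : ℂ | (1:ℝ)/2 < w.re} := isOpen_lt continuous_const Complex.continuous_re
    have hVo : IsOpen {w : ℂ | w.re < (1:ℝ)/2} := isOpen_lt Complex.continuous_re continuous_const
    have hcover : h '' bandsᶜ ⊆ {w : ℂ | (1:ℝ)/2 < w.re} ∪ {w : ℂ | w.re < (1:ℝ)/2} := by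
      rintro w ⟨z, hz, rfl⟩
      rcases root4 _ (hpow4 z hz) with hh | hh | hh | hh <;> rw [hh]
      · left
        simp only [Set.mem_setOf_eq, Complex.one_re]
        norm_num
      · right
        simp only [Set.mem_setOf_eq, Complex.neg_re, Complex.one_re]
        norm_num
      · right
        simp only [Set.mem_setOf_eq, Complex.I_re]
        norm_num
      · right
        simp only [Set.mem_setOf_eq, Complex.neg_re, Complex.I_re]
        norm_num
    have hne1 : (h '' bandsᶜ ∩ {w : ℂ | (1:ℝ)/2 < w.re}).Nonempty := by
      refine ⟨h ((n:ℝ):ℂ), ⟨_, hn1, rfl⟩, ?_⟩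
      rw [hval]
      simp only [Set.mem_setOf_eq, Complex.one_re]
      norm_num
    have hne2 : (h '' bandsᶜ ∩ {w : ℂ | w.re < (1:ℝ)/2}).Nonempty := by
      refine ⟨h z₀, ⟨z₀, hz₀, rfl⟩, ?_⟩
      rcases root4 _ (hpow4 z₀ hz₀) with hh | hh | hh | hh
      · exact absurd hh hz₀ne
      · rw [hh]
        simp only [Set.mem_setOf_eq, Complex.neg_re, Complex.one_re]
        norm_num
      · rw [hh]
        simp only [Set.mem_setOf_eq, Complex.I_re]
        norm_num
      · rw [hh]
        simp only [Set.mem_setOf_eq, Complex.neg_re, Complex.I_re]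
        norm_num
    obtain ⟨w, _, hw1, hw2⟩ := himg _ _ hU hVo hcover hne1 hne2
    rw [Set.mem_setOf_eq] at hw1 hw2
    linarith
  intro z hz
  have hz1 := hconst z hz
  rw [hdefh] at hz1
  simp only at hz1
  exact ((mul_inv_eq_one₀ (hden z hz)).mp hz1).symm

end Stmt17

/-- for `γ(z) = [∏_{j=0}^{g} (z−b_j)/(z−a_j)]^{1/4}` analytic on
`ℂ \ ∪_j [a_j,b_j]` and normalized so that `γ(z) → 1` as `z → ∞`
(with `a_0 < b_0 < a_1 < ⋯ < a_g < b_g` real), the function `γ + γ⁻¹` does not vanish on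
`ℂ \ ∪_j [a_j,b_j]`, while `γ − γ⁻¹` has exactly one root in each gap `(b_j, a_{j+1})`,
`j = 0,…,g−1`. -/
theorem stmt17
    (g : ℕ) (a b : ℕ → ℝ)
    (hab : ∀ j ≤ g, a j < b j)
    (hgap : ∀ j < g, b j < a (j + 1))
    (bands : Set ℂ)
    (hbands : bands = ⋃ j ∈ Finset.range (g + 1), (Complex.ofReal '' Set.Icc (a j) (b j)))
    (γ : ℂ → ℂ)
    (hγdiff : DifferentiableOn ℂ γ bandsᶜ)
    (hγpow : ∀ z ∈ bandsᶜ, (γ z) ^ 4 = ∏ j ∈ Finset.range (g + 1),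
      ((z - (b j : ℂ)) / (z - (a j : ℂ))))
    (hγlim : Tendsto γ (Bornology.cobounded ℂ) (𝓝 1)) :
    (∀ z ∈ bandsᶜ, γ z + (γ z)⁻¹ ≠ 0) ∧
      ∀ j < g, ∃! x : ℝ, x ∈ Set.Ioo (b j) (a (j + 1)) ∧
        γ (x : ℂ) - (γ (x : ℂ))⁻¹ = 0 := by
  have hγne : ∀ z ∈ bandsᶜ, γ z ≠ 0 := fun z hz => Stmt17.gamma_ne hab hbands γ hγpow hz
  have hrefl := Stmt17.reflect hab hgap hbands γ hγdiff hγpow hγlim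
  have hreal : ∀ x : ℝ, (x:ℂ) ∈ bandsᶜ → ∃ t : ℝ, γ (x:ℂ) = (t:ℂ) := by
    intro x hx
    have h1 := hrefl _ hx
    rw [Complex.conj_ofReal] at h1
    exact ⟨(γ (x:ℂ)).re, (Complex.conj_eq_iff_re.mp h1).symm⟩
  -- choose roots
  have hr' : ∀ j : ℕ, ∃ r : ℝ, j < g → r ∈ Set.Ioo (b j) (a (j+1)) ∧
      (∏ i ∈ Finset.range (g+1), (r - b i)) = ∏ i ∈ Finset.range (g+1), (r - a i) := by
    intro j
    by_cases hj : j < g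
    · obtain ⟨r, h1, h2⟩ := Stmt17.ivt hab hgap hj
      exact ⟨r, fun _ => ⟨h1, h2⟩⟩
    · exact ⟨0, fun hc => absurd hc hj⟩
  choose r hrprop using hr'
  have hrmono : ∀ i k, i < k → k < g → r i < r k := by
    intro i k hik hkg
    have h1 := (hrprop i (by omega)).1
    have h2 := (hrprop k hkg).1
    have h3 : a (i+1) < b (i+1) := hab (i+1) (by omega)
    have h4 : b (i+1) ≤ b k := Stmt17.chain_bb hab hgap (i+1) k (by omega) (by omega)
    have := h1.2
    have := h2.1
    linarith
  -- any complex root of the product equation is one of the gap roots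
  have hkey : ∀ z : ℂ, (∏ i ∈ Finset.range (g+1), (z - (b i:ℂ)))
      = (∏ i ∈ Finset.range (g+1), (z - (a i:ℂ))) → ∃ j, j < g ∧ z = ((r j : ℝ):ℂ) := by
    intro z hzeq
    by_contra hcon
    push_neg at hcon
    have hinj : Set.InjOn (fun i => ((r i:ℝ):ℂ)) (Finset.range g : Set ℕ) := by
      intro i hi k hk heq
      simp only [Finset.coe_range, Set.mem_Iio] at hi hk
      by_contra hne
      rcases lt_or_gt_of_ne hne with hlt | hlt
      · have := hrmono i k hlt hk
        rw [Complex.ofReal_inj.mp heq] at this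
        exact lt_irrefl _ this
      · have := hrmono k i hlt hi
        rw [Complex.ofReal_inj.mp heq] at this
        exact lt_irrefl _ this
    have hznot : z ∉ (Finset.range g).image (fun i => ((r i:ℝ):ℂ)) := by
      intro hmem
      obtain ⟨i, hi, hiz⟩ := Finset.mem_image.mp hmem
      exact hcon i (Finset.mem_range.mp hi) hiz.symm
    have hcard : (insert z ((Finset.range g).image (fun i => ((r i:ℝ):ℂ)))).card = g + 1 := by
      rw [Finset.card_insert_of_notMem hznot, Finset.card_image_of_injOn hinj,
        Finset.card_range]
    have hle := Stmt17.count hab hgap (insert z ((Finset.range g).image (fun i => ((r i:ℝ):ℂ))))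
      (by
        intro x hx
        rcases Finset.mem_insert.mp hx with hxz | hxm
        · subst hxz; exact hzeq
        · obtain ⟨i, hi, rfl⟩ := Finset.mem_image.mp hxm
          have hroot := (hrprop i (Finset.mem_range.mp hi)).2
          exact_mod_cast congrArg (Complex.ofReal) hroot)
    omega
  -- reduce root equations for γ to the product equation
  have hprodeq : ∀ z ∈ bandsᶜ, γ z ^ 4 = 1 →
      (∏ i ∈ Finset.range (g+1), (z - (b i:ℂ))) = ∏ i ∈ Finset.range (g+1), (z - (a i:ℂ)) := by
    intro z hz h4
    have hR : (∏ i ∈ Finset.range (g+1), ((z - (b i:ℂ)) / (z - (a i:ℂ)))) = 1 := by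
      rw [← hγpow z hz]; exact h4
    rw [Finset.prod_div_distrib] at hR
    exact (div_eq_one_iff_eq (Stmt17.prod_a_ne hab hbands hz)).mp hR
  constructor
  · -- γ + γ⁻¹ ≠ 0
    intro z hz hsum
    have hγz := hγne z hz
    have h2 : γ z ^ 2 = -1 := by
      have hm : γ z * (γ z + (γ z)⁻¹) = 0 := by rw [hsum, mul_zero]
      rw [mul_add, mul_inv_cancel₀ hγz] at hm
      linear_combination hm
    have h4 : γ z ^ 4 = 1 := by
      have he : γ z ^ 4 = (γ z ^ 2) ^ 2 := by ring
      rw [he, h2]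
      norm_num
    obtain ⟨j, hjg, rfl⟩ := hkey z (hprodeq z hz h4)
    obtain ⟨t, ht⟩ := hreal (r j) hz
    rw [ht] at h2
    have ht2 : t^2 = -1 := by exact_mod_cast h2
    nlinarith [sq_nonneg t]
  · -- gap roots of γ - γ⁻¹
    intro j hj
    have hgapmem : ∀ x : ℝ, x ∈ Set.Ioo (b j) (a (j+1)) → (x:ℂ) ∈ bandsᶜ :=
      fun x hx => Stmt17.gap_mem_compl hab hgap hbands hj hx
    have hforward : ∀ x : ℝ, x ∈ Set.Ioo (b j) (a (j+1)) →
        γ (x:ℂ) - (γ (x:ℂ))⁻¹ = 0 → x = r j := by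
      intro x hx hγx
      have hxc := hgapmem x hx
      have hγz := hγne _ hxc
      have h2 : γ (x:ℂ) ^ 2 = 1 := by
        have hm : γ (x:ℂ) * (γ (x:ℂ) - (γ (x:ℂ))⁻¹) = 0 := by rw [hγx, mul_zero]
        rw [mul_sub, mul_inv_cancel₀ hγz] at hm
        linear_combination hm
      have h4 : γ (x:ℂ) ^ 4 = 1 := by
        have he : γ (x:ℂ) ^ 4 = (γ (x:ℂ) ^ 2) ^ 2 := by ring
        rw [he, h2]
        norm_num
      obtain ⟨j', hj'g, hj'eq⟩ := hkey _ (hprodeq _ hxc h4)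
      have hxr : x = r j' := Complex.ofReal_inj.mp hj'eq
      have hjj : j' = j := by
        by_contra hne
        have hmem' := (hrprop j' hj'g).1
        rcases lt_or_gt_of_ne hne with hlt | hlt
        · have h1 : a (j'+1) ≤ b j := by
            rcases eq_or_lt_of_le (Nat.succ_le_of_lt hlt) with he | hlt2
            · have hj2 : j = j' + 1 := by omega
              subst hj2
              exact le_of_lt (hab (j'+1) (by omega))
            · exact le_of_lt (lt_of_lt_of_le (hab (j'+1) (by omega))
                (Stmt17.chain_bb hab hgap (j'+1) j (by omega) (by omega)))
          have := hmem'.2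
          have := hx.1
          rw [hxr] at this
          linarith
        · have h1 : a (j+1) ≤ b j' := by
            rcases eq_or_lt_of_le (Nat.succ_le_of_lt hlt) with he | hlt2
            · have hj2 : j' = j + 1 := by omega
              subst hj2
              exact le_of_lt (hab (j+1) (by omega))
            · exact le_of_lt (lt_of_lt_of_le (hab (j+1) (by omega))
                (Stmt17.chain_bb hab hgap (j+1) j' (by omega) (by omega)))
          have := hmem'.1
          have := hx.2
          rw [hxr] at this
          linarith
      rw [hxr, hjj]
    refine ⟨r j, ⟨(hrprop j hj).1, ?_⟩, fun y hy => hforward y hy.1 hy.2⟩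
    -- existence : γ(r j) - γ(r j)⁻¹ = 0
    have hrc : ((r j : ℝ):ℂ) ∈ bandsᶜ := hgapmem (r j) (hrprop j hj).1
    have hγz := hγne _ hrc
    have h4 : γ ((r j : ℝ):ℂ) ^ 4 = 1 := by
      rw [hγpow _ hrc, Finset.prod_div_distrib]
      have hpe : (∏ i ∈ Finset.range (g+1), (((r j:ℝ):ℂ) - (b i:ℂ)))
          = ∏ i ∈ Finset.range (g+1), (((r j:ℝ):ℂ) - (a i:ℂ)) := by
        have hroot := (hrprop j hj).2
        exact_mod_cast congrArg (Complex.ofReal) hroot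
      rw [hpe]
      exact div_self (Stmt17.prod_a_ne hab hbands hrc)
    obtain ⟨t, ht⟩ := hreal (r j) hrc
    rw [ht] at h4 ⊢
    have ht4 : t ^ 4 = 1 := by exact_mod_cast h4
    have ht2 : t ^ 2 = 1 := by
      have hfac : (t^2 - 1) * (t^2 + 1) = 0 := by linear_combination ht4
      rcases mul_eq_zero.mp hfac with hcase | hcase
      · linarith [sub_eq_zero.mp hcase]
      · nlinarith [sq_nonneg t]
    have htne : (t:ℂ) ≠ 0 := by rw [← ht]; exact hγz
    have hinv : ((t:ℂ))⁻¹ = (t:ℂ) := by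
      apply inv_eq_of_mul_eq_one_right
      have : (t:ℂ)^2 = 1 := by exact_mod_cast ht2
      linear_combination this
    rw [hinv, sub_self]
end
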